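/- arXiv:1506.03313 — 7 statements merged into one kernel-verified Lean document; each statement's English description precedes it below -/
import Mathlib

section
/- Let d, n ∈ ℕ with n ≥ 1, σ > 0, ε ≥ 0, C ≥ 0. Let μ be a probability measure on ℝᵈ, let y : Fin n → ℝ, and let f, m : ℝᵈ → (Fin n → ℝ) be measurable functions such that for μ-almost every ψ and every i, |f(ψ)ᵢ − m(ψ)ᵢ| ≤ ε and |2yᵢ − f(ψ)ᵢ − m(ψ)ᵢ| ≤ C. Define the two marginal likelihoods p = ∫ (2πσ²)^{−n/2} exp(−(1/(2σ²)) Σᵢ (yᵢ − f(ψ)ᵢ)²) dμ(ψ) and p̃ = ∫ (2πσ²)^{−n/2} exp(−(1/(2σ²)) Σᵢ (yᵢ − m(ψ)ᵢ)²) dμ(ψ). Then |p − p̃| ≤ (2πσ²)^{−n/2} · n·C·ε/(2σ²). -/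
open Real Finset MeasureTheory

lemma exp_lip_aux {x y : ℝ} (hx : x ≤ 0) (hy : y ≤ 0) :
    |Real.exp x - Real.exp y| ≤ |x - y| := by
  wlog h : y ≤ x generalizing x y
  · rw [abs_sub_comm, abs_sub_comm x y]
    exact this hy hx (le_of_not_ge h)
  have h1 := Real.add_one_le_exp (y - x)
  have h2 : Real.exp y = Real.exp x * Real.exp (y - x) := by
    rw [← Real.exp_add]; ring_nf
  have h3 : Real.exp x ≤ 1 := Real.exp_le_one_iff.2 hx
  have h4 : 0 < Real.exp x := Real.exp_pos x
  rw [abs_of_nonneg (sub_nonneg.2 (Real.exp_le_exp.2 h)),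
    abs_of_nonneg (sub_nonneg.2 h)]
  nlinarith

theorem stmt_1 (d n : ℕ) (hn : 1 ≤ n) (σ ε C : ℝ) (hσ : 0 < σ) (hε : 0 ≤ ε) (hC : 0 ≤ C)
    (μ : Measure (Fin d → ℝ)) [IsProbabilityMeasure μ]
    (y : Fin n → ℝ) (f m : (Fin d → ℝ) → (Fin n → ℝ))
    (hf : Measurable f) (hm : Measurable m)
    (hbound : ∀ᵐ ψ ∂μ, ∀ i, |f ψ i - m ψ i| ≤ ε ∧ |2 * y i - f ψ i - m ψ i| ≤ C) :
    |(∫ ψ, (2 * Real.pi * σ ^ 2) ^ (-(n : ℝ) / 2) *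
          Real.exp (-(1 / (2 * σ ^ 2)) * ∑ i, (y i - f ψ i) ^ 2) ∂μ) -
      (∫ ψ, (2 * Real.pi * σ ^ 2) ^ (-(n : ℝ) / 2) *
          Real.exp (-(1 / (2 * σ ^ 2)) * ∑ i, (y i - m ψ i) ^ 2) ∂μ)| ≤
    (2 * Real.pi * σ ^ 2) ^ (-(n : ℝ) / 2) * (n * C * ε / (2 * σ ^ 2)) := by
  have hσ2 : (0:ℝ) < 2 * σ ^ 2 := by positivity
  set c : ℝ := 1 / (2 * σ ^ 2) with hc
  have hcpos : 0 < c := by positivity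
  set A : ℝ := (2 * Real.pi * σ ^ 2) ^ (-(n : ℝ) / 2) with hA
  have hApos : 0 < A := by
    apply Real.rpow_pos_of_pos
    have := Real.pi_pos
    positivity
  set g : (Fin d → ℝ) → ℝ := fun ψ => Real.exp (-c * ∑ i, (y i - f ψ i) ^ 2) with hg
  set h : (Fin d → ℝ) → ℝ := fun ψ => Real.exp (-c * ∑ i, (y i - m ψ i) ^ 2) with hh
  have hgm : Measurable g := by
    apply Measurable.exp
    apply Measurable.const_mul
    exact Finset.measurable_sum _ fun i _ =>
      ((measurable_const.sub ((measurable_pi_apply i).comp hf)).pow_const 2)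
  have hhm : Measurable h := by
    apply Measurable.exp
    apply Measurable.const_mul
    exact Finset.measurable_sum _ fun i _ =>
      ((measurable_const.sub ((measurable_pi_apply i).comp hm)).pow_const 2)
  have hexp_le_one : ∀ (w : Fin n → ℝ), Real.exp (-c * ∑ i, (y i - w i) ^ 2) ≤ 1 := by
    intro w
    apply Real.exp_le_one_iff.2
    have hs : 0 ≤ ∑ i, (y i - w i) ^ 2 := Finset.sum_nonneg fun i _ => sq_nonneg _
    nlinarith
  have hgi : Integrable g μ := by
    apply (integrable_const (1:ℝ)).mono' hgm.aestronglyMeasurable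
    filter_upwards with ψ
    rw [Real.norm_eq_abs, abs_of_nonneg (Real.exp_nonneg _)]
    exact hexp_le_one _
  have hhi : Integrable h μ := by
    apply (integrable_const (1:ℝ)).mono' hhm.aestronglyMeasurable
    filter_upwards with ψ
    rw [Real.norm_eq_abs, abs_of_nonneg (Real.exp_nonneg _)]
    exact hexp_le_one _
  have key : |(∫ ψ, g ψ ∂μ) - (∫ ψ, h ψ ∂μ)| ≤ n * C * ε / (2 * σ ^ 2) := by
    rw [← integral_sub hgi hhi]
    have hb : ∀ᵐ ψ ∂μ, ‖g ψ - h ψ‖ ≤ n * C * ε / (2 * σ ^ 2) := by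
      filter_upwards [hbound] with ψ hψ
      rw [Real.norm_eq_abs]
      have hs : |(∑ i, (y i - f ψ i) ^ 2) - (∑ i, (y i - m ψ i) ^ 2)| ≤ n * (ε * C) := by
        rw [← Finset.sum_sub_distrib]
        calc |∑ i, ((y i - f ψ i) ^ 2 - (y i - m ψ i) ^ 2)|
            ≤ ∑ i, |(y i - f ψ i) ^ 2 - (y i - m ψ i) ^ 2| :=
              Finset.abs_sum_le_sum_abs _ _
          _ ≤ ∑ _i : Fin n, ε * C := by
              apply Finset.sum_le_sum
              intro i _
              have heq : (y i - f ψ i) ^ 2 - (y i - m ψ i) ^ 2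
                  = (f ψ i - m ψ i) * -(2 * y i - f ψ i - m ψ i) := by ring
              rw [heq, abs_mul, abs_neg]
              exact mul_le_mul (hψ i).1 (hψ i).2 (abs_nonneg _)
                hε
          _ = n * (ε * C) := by simp [Finset.sum_const, mul_comm]
      calc |g ψ - h ψ| ≤ |(-c * ∑ i, (y i - f ψ i) ^ 2) - (-c * ∑ i, (y i - m ψ i) ^ 2)| := by
            apply exp_lip_aux
            · have : 0 ≤ ∑ i, (y i - f ψ i) ^ 2 := Finset.sum_nonneg fun i _ => sq_nonneg _
              nlinarith
            · have : 0 ≤ ∑ i, (y i - m ψ i) ^ 2 := Finset.sum_nonneg fun i _ => sq_nonneg _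
              nlinarith
        _ = c * |(∑ i, (y i - f ψ i) ^ 2) - (∑ i, (y i - m ψ i) ^ 2)| := by
            have heq2 : (-c * ∑ i, (y i - f ψ i) ^ 2) - (-c * ∑ i, (y i - m ψ i) ^ 2)
                = -(c * ((∑ i, (y i - f ψ i) ^ 2) - (∑ i, (y i - m ψ i) ^ 2))) := by ring
            rw [heq2, abs_neg, abs_mul, abs_of_pos hcpos]
        _ ≤ c * (n * (ε * C)) := by
            exact mul_le_mul_of_nonneg_left hs hcpos.le
        _ = n * C * ε / (2 * σ ^ 2) := by
            rw [hc]; ring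
    have := norm_integral_le_of_norm_le_const (μ := μ) hb
    simpa [Real.norm_eq_abs] using this
  have h1 : (∫ ψ, A * g ψ ∂μ) = A * ∫ ψ, g ψ ∂μ := integral_const_mul A g
  have h2 : (∫ ψ, A * h ψ ∂μ) = A * ∫ ψ, h ψ ∂μ := integral_const_mul A h
  calc |(∫ ψ, A * g ψ ∂μ) - (∫ ψ, A * h ψ ∂μ)|
      = A * |(∫ ψ, g ψ ∂μ) - (∫ ψ, h ψ ∂μ)| := by
        rw [h1, h2, ← mul_sub, abs_mul, abs_of_pos hApos]
    _ ≤ A * (n * C * ε / (2 * σ ^ 2)) :=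
        mul_le_mul_of_nonneg_left key hApos.le
end

section
/- Let n ≥ 1, σ > 0, and let C be an n×n real symmetric positive semidefinite matrix. Then 0 ≤ σ^{−n} − det(σ²Iₙ + C)^{−1/2} ≤ σ^{−n} · tr(C)/(2σ²). -/
open Finset in
lemma my_weier {ι : Type*} (s : Finset ι) (a b : ι → ℝ)
    (ha0 : ∀ i ∈ s, 0 ≤ a i) (ha1 : ∀ i ∈ s, a i ≤ 1)
    (hb : ∀ i ∈ s, 0 ≤ b i) (hab : ∀ i ∈ s, 1 - b i ≤ a i) :
    1 - ∑ i ∈ s, b i ≤ ∏ i ∈ s, a i := by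
  classical
  induction s using Finset.cons_induction with
  | empty => simp
  | cons i s hi ih =>
    rw [Finset.prod_cons, Finset.sum_cons]
    have hP0 : 0 ≤ ∏ j ∈ s, a j := Finset.prod_nonneg fun j hj => ha0 j (Finset.mem_cons_of_mem hj)
    have hP1 : ∏ j ∈ s, a j ≤ 1 :=
      Finset.prod_le_one (fun j hj => ha0 j (Finset.mem_cons_of_mem hj))
        (fun j hj => ha1 j (Finset.mem_cons_of_mem hj))
    have hIH : 1 - ∑ j ∈ s, b j ≤ ∏ j ∈ s, a j :=
      ih (fun j hj => ha0 j (Finset.mem_cons_of_mem hj))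
        (fun j hj => ha1 j (Finset.mem_cons_of_mem hj))
        (fun j hj => hb j (Finset.mem_cons_of_mem hj))
        (fun j hj => hab j (Finset.mem_cons_of_mem hj))
    have hbi : 0 ≤ b i := hb i (Finset.mem_cons_self i s)
    have hai0 : 0 ≤ a i := ha0 i (Finset.mem_cons_self i s)
    have hai1 : a i ≤ 1 := ha1 i (Finset.mem_cons_self i s)
    have habi : 1 - b i ≤ a i := hab i (Finset.mem_cons_self i s)
    have hS : 0 ≤ ∑ j ∈ s, b j := Finset.sum_nonneg fun j hj => hb j (Finset.mem_cons_of_mem hj)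
    nlinarith [mul_nonneg hai0 hP0, mul_le_mul_of_nonneg_right habi hP0]

lemma my_scalar (x σ : ℝ) (hσ : 0 < σ) (hx : 0 ≤ x) :
    1 - x / (2 * σ ^ 2) ≤ σ * (σ ^ 2 + x) ^ (-(1:ℝ)/2) := by
  have ht : (0:ℝ) < σ ^ 2 + x := by positivity
  have h1 : (σ ^ 2 + x) ^ (-(1:ℝ)/2) = (Real.sqrt (σ ^ 2 + x))⁻¹ := by
    rw [neg_div, Real.rpow_neg ht.le, Real.sqrt_eq_rpow]
  rw [h1, ← div_eq_mul_inv]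
  have hs : 0 < Real.sqrt (σ ^ 2 + x) := Real.sqrt_pos.2 ht
  rw [le_div_iff₀ hs]
  have hsq : Real.sqrt (σ ^ 2 + x) ^ 2 = σ ^ 2 + x := Real.sq_sqrt ht.le
  set s := Real.sqrt (σ ^ 2 + x) with hsdef
  rcases le_or_gt x (2 * σ ^ 2) with h | h
  · have hA : 0 ≤ 2 * σ ^ 2 - x := by linarith
    have key : (2 * σ ^ 2 - x) * s ≤ 2 * σ ^ 2 * σ := by
      nlinarith [mul_nonneg hA hs.le, sq_nonneg ((2 * σ ^ 2 - x) * s + 2 * σ ^ 2 * σ),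
        mul_nonneg (mul_nonneg hx hx) (by linarith : (0:ℝ) ≤ 3 * σ ^ 2 - x),
        sq_nonneg (2 * σ ^ 2 - x), mul_pos hσ (mul_pos hσ hσ)]
    have heq : (1 - x / (2 * σ ^ 2)) * s = ((2 * σ ^ 2 - x) * s) / (2 * σ ^ 2) := by
      field_simp
    rw [heq, div_le_iff₀ (by positivity)]
    linarith [key]
  · have hc : 1 - x / (2 * σ ^ 2) < 0 := by
      rw [sub_neg, lt_div_iff₀ (by positivity)]; linarith
    nlinarith [mul_pos hσ hs]

lemma my_scalar' (x σ : ℝ) (hσ : 0 < σ) (hx : 0 ≤ x) :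
    σ * (σ ^ 2 + x) ^ (-(1:ℝ)/2) ≤ 1 := by
  have ht : (0:ℝ) < σ ^ 2 := by positivity
  have h := Real.rpow_le_rpow_of_nonpos ht (by linarith : σ ^ 2 ≤ σ ^ 2 + x)
    (by norm_num : (-(1:ℝ)/2) ≤ 0)
  have h2 : (σ ^ 2 : ℝ) ^ (-(1:ℝ)/2) = σ⁻¹ := by
    rw [neg_div, Real.rpow_neg ht.le, show ((1:ℝ)/2) = 2⁻¹ by norm_num,
      ← Real.rpow_natCast σ 2, ← Real.rpow_mul hσ.le]
    norm_num
  calc σ * (σ ^ 2 + x) ^ (-(1:ℝ)/2) ≤ σ * (σ ^ 2 : ℝ) ^ (-(1:ℝ)/2) :=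
        mul_le_mul_of_nonneg_left h hσ.le
    _ = 1 := by rw [h2, mul_inv_cancel₀ hσ.ne']

theorem stmt_4 (n : ℕ) (hn : 1 ≤ n) (σ : ℝ) (hσ : 0 < σ)
    (C : Matrix (Fin n) (Fin n) ℝ) (hC : C.PosSemidef) :
    0 ≤ σ ^ (-(n : ℝ)) -
        ((σ ^ 2 • (1 : Matrix (Fin n) (Fin n) ℝ) + C).det) ^ (-(1 : ℝ) / 2) ∧
      σ ^ (-(n : ℝ)) -
          ((σ ^ 2 • (1 : Matrix (Fin n) (Fin n) ℝ) + C).det) ^ (-(1 : ℝ) / 2) ≤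
        σ ^ (-(n : ℝ)) * (C.trace / (2 * σ ^ 2)) := by
  classical
  have hH := hC.1
  set lam := hH.eigenvalues with hlam
  have hl : ∀ i, 0 ≤ lam i := hC.eigenvalues_nonneg
  set U : Matrix (Fin n) (Fin n) ℝ := (hH.eigenvectorUnitary : Matrix (Fin n) (Fin n) ℝ)
    with hUdef
  have hspec : C = U * Matrix.diagonal lam * star U := by
    have := hH.spectral_theorem
    simpa [hUdef] using this
  have hU1 : U * star U = 1 := Matrix.mem_unitaryGroup_iff.mp hH.eigenvectorUnitary.2
  have hU2 : star U * U = 1 := Matrix.mem_unitaryGroup_iff'.mp hH.eigenvectorUnitary.2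
  have hdet : (σ ^ 2 • (1 : Matrix (Fin n) (Fin n) ℝ) + C).det = ∏ i, (σ ^ 2 + lam i) := by
    have hM : σ ^ 2 • (1 : Matrix (Fin n) (Fin n) ℝ) + C
        = U * Matrix.diagonal (fun i => σ ^ 2 + lam i) * star U := by
      have hdiag : Matrix.diagonal (fun i => σ ^ 2 + lam i)
          = σ ^ 2 • (1 : Matrix (Fin n) (Fin n) ℝ) + Matrix.diagonal lam := by
        ext i j
        by_cases h : i = j <;> simp [h, Matrix.diagonal_apply, Matrix.one_apply]
      rw [hdiag, Matrix.mul_add, Matrix.add_mul, ← hspec, mul_smul_comm,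
        smul_mul_assoc, Matrix.mul_one, hU1]
    rw [hM, Matrix.det_mul_right_comm, hU1, Matrix.one_mul, Matrix.det_diagonal]
  have htr : C.trace = ∑ i, lam i := by
    rw [hspec, Matrix.trace_mul_comm, ← Matrix.mul_assoc, hU2, Matrix.one_mul,
      Matrix.trace_diagonal]
  -- rewrite σ ^ (-(n:ℝ)) as a product
  have hσn : σ ^ (-(n : ℝ)) = ∏ _i : Fin n, σ⁻¹ := by
    rw [Real.rpow_neg hσ.le, Real.rpow_natCast, Finset.prod_const, inv_pow,
      Finset.card_univ, Fintype.card_fin]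
  have hfac : ∀ i : Fin n, (0:ℝ) < σ ^ 2 + lam i := fun i => by
    have := hl i; positivity
  have hdet_rpow : ((σ ^ 2 • (1 : Matrix (Fin n) (Fin n) ℝ) + C).det) ^ (-(1:ℝ)/2)
      = ∏ i, (σ ^ 2 + lam i) ^ (-(1:ℝ)/2) := by
    rw [hdet, ← Real.finset_prod_rpow _ _ (fun i _ => (hfac i).le)]
  have hσpos : (0:ℝ) < σ⁻¹ := by positivity
  set a : Fin n → ℝ := fun i => σ * (σ ^ 2 + lam i) ^ (-(1:ℝ)/2) with hadef
  have ha0 : ∀ i, 0 ≤ a i := fun i => by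
    have := (hfac i); positivity
  have ha1 : ∀ i, a i ≤ 1 := fun i => my_scalar' (lam i) σ hσ (hl i)
  have hab : ∀ i, 1 - lam i / (2 * σ ^ 2) ≤ a i := fun i => my_scalar (lam i) σ hσ (hl i)
  have hsplit : ∀ i : Fin n, (σ ^ 2 + lam i) ^ (-(1:ℝ)/2) = σ⁻¹ * a i := fun i => by
    rw [hadef]; field_simp
  have hprod : ((σ ^ 2 • (1 : Matrix (Fin n) (Fin n) ℝ) + C).det) ^ (-(1:ℝ)/2)
      = σ ^ (-(n : ℝ)) * ∏ i, a i := by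
    rw [hdet_rpow, hσn, ← Finset.prod_mul_distrib]
    exact Finset.prod_congr rfl fun i _ => hsplit i
  have hσnpos : 0 < σ ^ (-(n : ℝ)) := Real.rpow_pos_of_pos hσ _
  have hPle1 : ∏ i, a i ≤ 1 :=
    Finset.prod_le_one (fun i _ => ha0 i) (fun i _ => ha1 i)
  have hPge : 1 - C.trace / (2 * σ ^ 2) ≤ ∏ i, a i := by
    have := my_weier Finset.univ a (fun i => lam i / (2 * σ ^ 2))
      (fun i _ => ha0 i) (fun i _ => ha1 i)
      (fun i _ => by have := hl i; positivity) (fun i _ => hab i)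
    rwa [htr, Finset.sum_div]
  constructor
  · rw [hprod]
    nlinarith [hσnpos, hPle1]
  · rw [hprod]
    have h2 : σ ^ (-(n : ℝ)) - σ ^ (-(n : ℝ)) * ∏ i, a i
        = σ ^ (-(n : ℝ)) * (1 - ∏ i, a i) := by ring
    rw [h2]
    exact mul_le_mul_of_nonneg_left (by linarith [hPge]) hσnpos.le
end

section
/- Let n ≥ 1, σ > 0, let C be an n×n real symmetric positive semidefinite matrix, and let v ∈ ℝⁿ. Then 0 ≤ vᵀ(σ²Iₙ)⁻¹v − vᵀ(σ²Iₙ + C)⁻¹v ≤ ‖v‖² · tr(C)/σ⁴. -/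
open Matrix

-- Auxiliary: quadratic form of a PSD real matrix is bounded by trace times norm squared.
lemma aux_quad_le_trace (n : ℕ) (C : Matrix (Fin n) (Fin n) ℝ) (hC : C.PosSemidef)
    (v : Fin n → ℝ) : v ⬝ᵥ (C *ᵥ v) ≤ (∑ i, v i ^ 2) * C.trace := by
  obtain ⟨B, rfl⟩ : ∃ B : Matrix (Fin n) (Fin n) ℝ, C = Bᴴ * B := by
    open scoped MatrixOrder in exact CStarAlgebra.nonneg_iff_eq_star_mul_self.mp hC.nonneg
  have h1 : v ⬝ᵥ ((Bᴴ * B) *ᵥ v) = (B *ᵥ v) ⬝ᵥ (B *ᵥ v) := by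
    rw [← mulVec_mulVec, Matrix.dotProduct_mulVec v Bᴴ (B *ᵥ v)]
    congr 1
    have := Matrix.star_mulVec (M := B) (v := v)
    simpa using this.symm
  rw [h1]
  have h2 : (Bᴴ * B).trace = ∑ i, ∑ j, B i j ^ 2 := by
    rw [Matrix.trace]
    simp only [Matrix.diag, Matrix.mul_apply, Matrix.conjTranspose_apply, star_trivial]
    rw [Finset.sum_comm]
    simp [sq]
  rw [h2, Finset.mul_sum, dotProduct]
  apply Finset.sum_le_sum
  intro i _
  have := Finset.sum_mul_sq_le_sq_mul_sq Finset.univ (fun j => B i j) v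
  calc (B *ᵥ v) i * (B *ᵥ v) i = (∑ j, B i j * v j) ^ 2 := by
        simp [Matrix.mulVec, dotProduct, sq]
    _ ≤ (∑ j, B i j ^ 2) * ∑ j, v j ^ 2 := this
    _ = (∑ j, v j ^ 2) * ∑ j, B i j ^ 2 := mul_comm _ _

theorem stmt_7 (n : ℕ) (hn : 1 ≤ n) (σ : ℝ) (hσ : 0 < σ)
    (C : Matrix (Fin n) (Fin n) ℝ) (hC : C.PosSemidef)
    (v : EuclideanSpace ℝ (Fin n)) :
    0 ≤ v ⬝ᵥ ((σ ^ 2 • (1 : Matrix (Fin n) (Fin n) ℝ))⁻¹ *ᵥ v) -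
        v ⬝ᵥ ((σ ^ 2 • (1 : Matrix (Fin n) (Fin n) ℝ) + C)⁻¹ *ᵥ v) ∧
      v ⬝ᵥ ((σ ^ 2 • (1 : Matrix (Fin n) (Fin n) ℝ))⁻¹ *ᵥ v) -
          v ⬝ᵥ ((σ ^ 2 • (1 : Matrix (Fin n) (Fin n) ℝ) + C)⁻¹ *ᵥ v) ≤
        ‖v‖ ^ 2 * C.trace / σ ^ 4 := by
  have hσ2 : (0:ℝ) < σ ^ 2 := by positivity
  have hCT : Cᵀ = C := by
    ext i j
    have := congrFun (congrFun hC.1 i) j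
    simpa using this
  set A : Matrix (Fin n) (Fin n) ℝ := σ ^ 2 • (1 : Matrix (Fin n) (Fin n) ℝ) + C with hA_def
  -- A is positive definite
  have hA : A.PosDef := by
    refine Matrix.PosDef.of_dotProduct_mulVec_pos ?_ ?_
    · unfold Matrix.IsHermitian
      rw [hA_def]
      simp [Matrix.conjTranspose_add, Matrix.conjTranspose_smul, hC.1.eq, hCT]
    · intro x hx
      have h1 : (star x) ⬝ᵥ (A *ᵥ x) = σ ^ 2 * (x ⬝ᵥ x) + x ⬝ᵥ (C *ᵥ x) := by
        simp [hA_def, Matrix.add_mulVec, Matrix.smul_mulVec, Matrix.one_mulVec,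
          dotProduct_add, dotProduct_smul, smul_eq_mul]
      rw [h1]
      have h2 : 0 < x ⬝ᵥ x := by
        have : x ⬝ᵥ x = ∑ i, x i ^ 2 := by simp [dotProduct, sq]
        rw [this]
        apply Finset.sum_pos'
        · intro i _; positivity
        · obtain ⟨i, hi⟩ := Function.ne_iff.mp hx
          exact ⟨i, Finset.mem_univ i, by rw [sq]; exact mul_self_pos.mpr hi⟩
      have h3 : 0 ≤ x ⬝ᵥ (C *ᵥ x) := hC.dotProduct_mulVec_nonneg x
      nlinarith
  have hdet : IsUnit A.det := hA.det_pos.ne'.isUnit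
  have hAA : A * A⁻¹ = 1 := Matrix.mul_nonsing_inv A hdet
  -- the inverse of σ²•1
  have hinv1 : (σ ^ 2 • (1 : Matrix (Fin n) (Fin n) ℝ))⁻¹ = (σ ^ 2)⁻¹ • 1 := by
    apply Matrix.inv_eq_right_inv
    rw [Matrix.smul_mul, Matrix.mul_smul, Matrix.one_mul, smul_smul]
    rw [mul_inv_cancel₀ hσ2.ne']
    simp
  set u : Fin n → ℝ := A⁻¹ *ᵥ v with hu_def
  have hvu : A *ᵥ u = v := by
    rw [hu_def, Matrix.mulVec_mulVec, hAA, Matrix.one_mulVec]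
  set w : Fin n → ℝ := C *ᵥ u with hw_def
  -- symmetry of C on dot products
  have hCsym : ∀ x y : Fin n → ℝ, x ⬝ᵥ (C *ᵥ y) = (C *ᵥ x) ⬝ᵥ y := by
    intro x y
    rw [Matrix.dotProduct_mulVec, ← Matrix.mulVec_transpose, hCT]
  have hvAu : v ⬝ᵥ (A⁻¹ *ᵥ v) = v ⬝ᵥ u := rfl
  have hv_expand : (v : Fin n → ℝ) = σ ^ 2 • u + w := by
    rw [← hvu, hA_def, Matrix.add_mulVec, Matrix.smul_mulVec, Matrix.one_mulVec, hw_def]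
  -- first term
  have hfirst : v ⬝ᵥ ((σ ^ 2 • (1 : Matrix (Fin n) (Fin n) ℝ))⁻¹ *ᵥ v) =
      (σ ^ 2)⁻¹ * (v ⬝ᵥ v) := by
    rw [hinv1, Matrix.smul_mulVec, Matrix.one_mulVec, dotProduct_smul, smul_eq_mul]
  -- the key algebraic identity for the difference
  have hdiff : v ⬝ᵥ ((σ ^ 2 • (1 : Matrix (Fin n) (Fin n) ℝ))⁻¹ *ᵥ v) -
      v ⬝ᵥ (A⁻¹ *ᵥ v) = u ⬝ᵥ w + (σ ^ 2)⁻¹ * (w ⬝ᵥ w) := by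
    rw [hfirst, hvAu]
    have hvv : v ⬝ᵥ v = σ ^ 2 * σ ^ 2 * (u ⬝ᵥ u) + 2 * σ ^ 2 * (u ⬝ᵥ w) + w ⬝ᵥ w := by
      rw [hv_expand]
      simp only [dotProduct_add, add_dotProduct, dotProduct_smul, smul_dotProduct, smul_eq_mul]
      rw [dotProduct_comm w u]
      ring
    have hvu' : v ⬝ᵥ u = σ ^ 2 * (u ⬝ᵥ u) + w ⬝ᵥ u := by
      rw [hv_expand]
      simp only [add_dotProduct, smul_dotProduct, smul_eq_mul]
    rw [hvv, hvu', dotProduct_comm w u]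
    field_simp
    ring
  have huw : 0 ≤ u ⬝ᵥ w := hC.dotProduct_mulVec_nonneg u
  have hww : 0 ≤ w ⬝ᵥ w := by
    have : w ⬝ᵥ w = ∑ i, w i ^ 2 := by simp [dotProduct, sq]
    rw [this]; positivity
  constructor
  · rw [hdiff]
    have : 0 ≤ (σ ^ 2)⁻¹ * (w ⬝ᵥ w) := by positivity
    linarith
  · rw [hdiff]
    -- bound by σ⁻⁴ * v ⬝ᵥ (C *ᵥ v)
    have hvCv : v ⬝ᵥ (C *ᵥ v) = σ ^ 2 * σ ^ 2 * (u ⬝ᵥ w) + 2 * σ ^ 2 * (w ⬝ᵥ w)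
        + w ⬝ᵥ (C *ᵥ w) := by
      nth_rewrite 1 [hv_expand]
      rw [hv_expand]
      rw [Matrix.mulVec_add, Matrix.mulVec_smul]
      simp only [dotProduct_add, add_dotProduct, dotProduct_smul, smul_dotProduct, smul_eq_mul]
      have h1 : u ⬝ᵥ (C *ᵥ w) = w ⬝ᵥ w := by rw [hCsym u w, ← hw_def]
      have h2 : w ⬝ᵥ (C *ᵥ u) = w ⬝ᵥ w := by rw [← hw_def]
      rw [h1, h2]
      ring
    have hwCw : 0 ≤ w ⬝ᵥ (C *ᵥ w) := hC.dotProduct_mulVec_nonneg w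
    have hstep : u ⬝ᵥ w + (σ ^ 2)⁻¹ * (w ⬝ᵥ w) ≤ (σ ^ 4)⁻¹ * (v ⬝ᵥ (C *ᵥ v)) := by
      rw [hvCv]
      have hσ4 : (0:ℝ) < σ ^ 4 := by positivity
      have key : (σ ^ 4)⁻¹ * (σ ^ 2 * σ ^ 2 * (u ⬝ᵥ w) + 2 * σ ^ 2 * (w ⬝ᵥ w) + w ⬝ᵥ (C *ᵥ w))
          - (u ⬝ᵥ w + (σ ^ 2)⁻¹ * (w ⬝ᵥ w))
          = (σ ^ 2)⁻¹ * (w ⬝ᵥ w) + (σ ^ 4)⁻¹ * (w ⬝ᵥ (C *ᵥ w)) := by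
        field_simp
        ring
      rw [← sub_nonneg, key]
      exact add_nonneg (mul_nonneg (inv_nonneg.mpr hσ2.le) hww)
        (mul_nonneg (inv_nonneg.mpr hσ4.le) hwCw)
    refine hstep.trans ?_
    -- Cauchy–Schwarz / trace bound
    have hnorm : ‖v‖ ^ 2 = ∑ i, v i ^ 2 := by
      rw [EuclideanSpace.norm_eq]
      rw [Real.sq_sqrt (by positivity)]
      simp [sq_abs]
    have := aux_quad_le_trace n C hC v
    rw [div_eq_mul_inv, mul_comm (‖v‖ ^ 2 * C.trace) _, hnorm]
    have hσ4 : (0:ℝ) < σ ^ 4 := by positivity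
    apply mul_le_mul_of_nonneg_left this (inv_nonneg.mpr hσ4.le) |>.trans
    apply le_of_eq
    ring
end

section
/- Let n ≥ 1, σ > 0, y, μ ∈ ℝⁿ, and let C be an n×n real symmetric positive semidefinite matrix. Define the Gaussian densities g_C(y) = (2π)^{−n/2} det(σ²Iₙ + C)^{−1/2} exp(−½ (y−μ)ᵀ(σ²Iₙ + C)⁻¹(y−μ)) and g₀(y) = (2πσ²)^{−n/2} exp(−‖y−μ‖²/(2σ²)). Then |g_C(y) − g₀(y)| ≤ (2π)^{−n/2} σ^{−n} · (tr(C)/(2σ²)) · (1 + ‖y−μ‖²/σ²). -/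
open Matrix Real Finset

lemma core_ineq (a b p m E1 E0 : ℝ) (ha : 0 ≤ a) (hb : 0 ≤ b)
    (hm : 0 < m) (hp : 0 < p) (hpm : p ≤ m) (hmp : m - p ≤ m * a)
    (hE1le : E1 ≤ 1) (hE0pos : 0 < E0) (hE1pos : 0 < E1) (hE0le : E0 ≤ E1)
    (hEd : E1 - E0 ≤ a * b) :
    |p * E1 - m * E0| ≤ m * a * (1 + b) := by
  rw [abs_le]
  constructor
  · have h1 : 0 ≤ (m - p) * (1 - E0) :=
      mul_nonneg (by linarith) (by linarith [hE0le.trans hE1le])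
    have h2 : 0 ≤ p * (E1 - E0) := mul_nonneg hp.le (by linarith)
    nlinarith [mul_nonneg (mul_nonneg hm.le ha) hb]
  · have h1 : 0 ≤ (m - p) * E1 := mul_nonneg (by linarith) hE1pos.le
    have h2 : m * (E1 - E0) ≤ m * (a * b) :=
      mul_le_mul_of_nonneg_left hEd hm.le
    nlinarith [mul_nonneg hm.le ha]

lemma abs_bound (n : ℕ) (s T N Q P m : ℝ) (hs : 0 < s) (hm : 0 < m)
    (hT : 0 ≤ T) (hN : 0 ≤ N) (hQ0 : 0 ≤ Q) (hP : 0 < P)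
    (hsn : (s ^ n) ^ (-(1 : ℝ) / 2) = m)
    (hQle : Q ≤ N / s) (hQge : N / s ≤ Q + T * N / s ^ 2)
    (hPlow : s ^ n ≤ P) (hPhigh : P ≤ s ^ n * Real.exp (T / s)) :
    |P ^ (-(1 : ℝ) / 2) * Real.exp (-(1 / 2) * Q) - m * Real.exp (-N / (2 * s))| ≤
      m * (T / (2 * s)) * (1 + N / s) := by
  set p := P ^ (-(1 : ℝ) / 2) with hp_def
  have hp : 0 < p := Real.rpow_pos_of_pos hP _
  have hpm : p ≤ m := by
    rw [hp_def, ← hsn]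
    exact Real.rpow_le_rpow_of_nonpos (by positivity) hPlow (by norm_num)
  have hmp : m - p ≤ m * (T / (2 * s)) := by
    have h1 : (s ^ n * Real.exp (T / s)) ^ (-(1 : ℝ) / 2) ≤ p :=
      Real.rpow_le_rpow_of_nonpos hP hPhigh (by norm_num)
    have h2 : (s ^ n * Real.exp (T / s)) ^ (-(1 : ℝ) / 2)
        = m * Real.exp (-(T / (2 * s))) := by
      rw [Real.mul_rpow (by positivity) (Real.exp_pos _).le, hsn, ← Real.exp_mul,
        show T / s * (-(1 : ℝ) / 2) = -(T / (2 * s)) by ring]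
    have h3 : 1 - T / (2 * s) ≤ Real.exp (-(T / (2 * s))) := by
      have := Real.add_one_le_exp (-(T / (2 * s)))
      linarith
    have h4 : m * (1 - T / (2 * s)) ≤ p := by
      calc m * (1 - T / (2 * s)) ≤ m * Real.exp (-(T / (2 * s))) :=
            mul_le_mul_of_nonneg_left h3 hm.le
        _ = (s ^ n * Real.exp (T / s)) ^ (-(1 : ℝ) / 2) := h2.symm
        _ ≤ p := h1
    nlinarith
  set E1 := Real.exp (-(1 / 2) * Q) with hE1_def
  set E0 := Real.exp (-N / (2 * s)) with hE0_def
  have hE1le : E1 ≤ 1 := Real.exp_le_one_iff.mpr (by nlinarith)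
  have hE1pos : 0 < E1 := Real.exp_pos _
  have hE0pos : 0 < E0 := Real.exp_pos _
  have hab : (1 / 2) * Q ≤ N / (2 * s) := by
    rw [show N / (2 * s) = (1 / 2) * (N / s) by ring]
    linarith
  have hE0le : E0 ≤ E1 := by
    rw [hE1_def, hE0_def]
    apply Real.exp_le_exp.mpr
    rw [show -N / (2 * s) = -(N / (2 * s)) by ring]
    linarith
  have hEdiff : E1 - E0 ≤ N / (2 * s) - (1 / 2) * Q := by
    have h6 : E0 = E1 * Real.exp ((1 / 2) * Q - N / (2 * s)) := by
      rw [hE1_def, hE0_def, ← Real.exp_add,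
        show -(1 / 2) * Q + ((1 / 2) * Q - N / (2 * s)) = -N / (2 * s) by ring]
    have h8 : E1 * (1 - Real.exp ((1 / 2) * Q - N / (2 * s)))
        ≤ 1 * (N / (2 * s) - (1 / 2) * Q) := by
      apply mul_le_mul hE1le ?_ ?_ zero_le_one
      · have := Real.add_one_le_exp ((1 / 2) * Q - N / (2 * s))
        linarith
      · have : Real.exp ((1 / 2) * Q - N / (2 * s)) ≤ 1 :=
          Real.exp_le_one_iff.mpr (by linarith)
        linarith
    calc E1 - E0 = E1 * (1 - Real.exp ((1 / 2) * Q - N / (2 * s))) := by rw [h6]; ring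
      _ ≤ 1 * (N / (2 * s) - (1 / 2) * Q) := h8
      _ = N / (2 * s) - (1 / 2) * Q := one_mul _
  have hEd : E1 - E0 ≤ (T / (2 * s)) * (N / s) := by
    have heq : (T / (2 * s)) * (N / s) = T * N / (2 * s ^ 2) := by
      ring
    rw [heq]
    have h9 : N / (2 * s) - (1 / 2) * Q ≤ T * N / (2 * s ^ 2) := by
      rw [show T * N / (2 * s ^ 2) = (1 / 2) * (T * N / s ^ 2) by ring,
        show N / (2 * s) = (1 / 2) * (N / s) by ring]
      linarith
    linarith
  exact core_ineq (T / (2 * s)) (N / s) p m E1 E0 (by positivity) (by positivity)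
    hm hp hpm hmp hE1le hE0pos hE1pos hE0le hEd

lemma scalar_aux (n : ℕ) (σ : ℝ) (hσ : 0 < σ) (c d : Fin n → ℝ) (hd : ∀ i, 0 ≤ d i) :
    |(∏ i, (σ ^ 2 + d i)) ^ (-(1 : ℝ) / 2) *
        Real.exp (-(1 / 2) * ∑ i, (σ ^ 2 + d i)⁻¹ * c i ^ 2) -
      σ ^ (-(n : ℝ)) * Real.exp (-(∑ i, c i ^ 2) / (2 * σ ^ 2))| ≤
    σ ^ (-(n : ℝ)) * ((∑ i, d i) / (2 * σ ^ 2)) * (1 + (∑ i, c i ^ 2) / σ ^ 2) := by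
  have hs : (0 : ℝ) < σ ^ 2 := by positivity
  have hsd : ∀ i : Fin n, 0 < σ ^ 2 + d i := fun i => by have := hd i; linarith
  have hsn : ((σ ^ 2) ^ n) ^ (-(1 : ℝ) / 2) = σ ^ (-(n : ℝ)) := by
    rw [← pow_mul, ← Real.rpow_natCast σ (2 * n), ← Real.rpow_mul hσ.le]
    push_cast
    ring_nf
  refine abs_bound n (σ ^ 2) (∑ i, d i) (∑ i, c i ^ 2) (∑ i, (σ ^ 2 + d i)⁻¹ * c i ^ 2)
    (∏ i, (σ ^ 2 + d i)) (σ ^ (-(n : ℝ))) hs (Real.rpow_pos_of_pos hσ _)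
    (Finset.sum_nonneg fun i _ => hd i) (Finset.sum_nonneg fun i _ => sq_nonneg _)
    (Finset.sum_nonneg fun i _ => mul_nonneg (inv_nonneg.2 (hsd i).le) (sq_nonneg _))
    (Finset.prod_pos fun i _ => hsd i) hsn ?_ ?_ ?_ ?_
  · rw [Finset.sum_div]
    refine Finset.sum_le_sum fun i _ => ?_
    have hinv : (σ ^ 2 + d i)⁻¹ ≤ (σ ^ 2)⁻¹ := inv_anti₀ hs (by linarith [hd i])
    calc (σ ^ 2 + d i)⁻¹ * c i ^ 2 ≤ (σ ^ 2)⁻¹ * c i ^ 2 :=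
          mul_le_mul_of_nonneg_right hinv (sq_nonneg _)
      _ = c i ^ 2 / σ ^ 2 := (div_eq_inv_mul _ _).symm
  · have key : ∀ i : Fin n, (σ ^ 2)⁻¹ * c i ^ 2 ≤
        (σ ^ 2 + d i)⁻¹ * c i ^ 2 + (∑ j, d j) / (σ ^ 2) ^ 2 * c i ^ 2 := by
      intro i
      have hdT : d i ≤ ∑ j, d j := Finset.single_le_sum (fun j _ => hd j) (Finset.mem_univ i)
      have hne : σ ^ 2 + d i ≠ 0 := (hsd i).ne'
      have e : (σ ^ 2)⁻¹ - (σ ^ 2 + d i)⁻¹ = d i / (σ ^ 2 * (σ ^ 2 + d i)) := by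
        field_simp
        ring
      have b : d i / (σ ^ 2 * (σ ^ 2 + d i)) ≤ (∑ j, d j) / (σ ^ 2) ^ 2 := by
        apply div_le_div₀ (Finset.sum_nonneg fun j _ => hd j) hdT (by positivity)
        nlinarith [hd i, hs]
      nlinarith [sq_nonneg (c i)]
    calc (∑ i, c i ^ 2) / σ ^ 2 = ∑ i, (σ ^ 2)⁻¹ * c i ^ 2 := by
          rw [Finset.sum_div]
          exact Finset.sum_congr rfl fun i _ => div_eq_inv_mul _ _
      _ ≤ ∑ i, ((σ ^ 2 + d i)⁻¹ * c i ^ 2 + (∑ j, d j) / (σ ^ 2) ^ 2 * c i ^ 2) :=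
          Finset.sum_le_sum fun i _ => key i
      _ = (∑ i, (σ ^ 2 + d i)⁻¹ * c i ^ 2) + (∑ j, d j) * (∑ i, c i ^ 2) / (σ ^ 2) ^ 2 := by
          rw [Finset.sum_add_distrib, ← Finset.mul_sum]
          ring
  · calc (σ ^ 2) ^ n = ∏ _i : Fin n, σ ^ 2 := by
          rw [Finset.prod_const, Finset.card_univ, Fintype.card_fin]
      _ ≤ ∏ i, (σ ^ 2 + d i) :=
          Finset.prod_le_prod (fun i _ => hs.le) (fun i _ => by linarith [hd i])
  · calc (∏ i, (σ ^ 2 + d i)) ≤ ∏ i, σ ^ 2 * Real.exp (d i / σ ^ 2) := by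
          refine Finset.prod_le_prod (fun i _ => (hsd i).le) (fun i _ => ?_)
          have h1 := Real.add_one_le_exp (d i / σ ^ 2)
          have h2 : σ ^ 2 * (d i / σ ^ 2 + 1) ≤ σ ^ 2 * Real.exp (d i / σ ^ 2) :=
            mul_le_mul_of_nonneg_left h1 hs.le
          calc σ ^ 2 + d i = σ ^ 2 * (d i / σ ^ 2 + 1) := by field_simp; ring
            _ ≤ σ ^ 2 * Real.exp (d i / σ ^ 2) := h2
      _ = (σ ^ 2) ^ n * Real.exp ((∑ i, d i) / σ ^ 2) := by
          rw [Finset.prod_mul_distrib, Finset.prod_const, Finset.card_univ, Fintype.card_fin,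
            ← Real.exp_sum, ← Finset.sum_div]

theorem stmt_8 (n : ℕ) (hn : 1 ≤ n) (σ : ℝ) (hσ : 0 < σ)
    (y μ : EuclideanSpace ℝ (Fin n))
    (C : Matrix (Fin n) (Fin n) ℝ) (hC : C.PosSemidef) :
    |(2 * Real.pi) ^ (-(n : ℝ) / 2) *
          ((σ ^ 2 • (1 : Matrix (Fin n) (Fin n) ℝ) + C).det) ^ (-(1 : ℝ) / 2) *
          Real.exp (-(1 / 2) *
            ((y - μ) ⬝ᵥ ((σ ^ 2 • (1 : Matrix (Fin n) (Fin n) ℝ) + C)⁻¹ *ᵥ (y - μ)))) -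
        (2 * Real.pi * σ ^ 2) ^ (-(n : ℝ) / 2) *
          Real.exp (-(‖y - μ‖ ^ 2) / (2 * σ ^ 2))| ≤
      (2 * Real.pi) ^ (-(n : ℝ) / 2) * σ ^ (-(n : ℝ)) * (C.trace / (2 * σ ^ 2)) *
        (1 + ‖y - μ‖ ^ 2 / σ ^ 2) := by
  have hH : C.IsHermitian := hC.1
  set U : Matrix (Fin n) (Fin n) ℝ := (hH.eigenvectorUnitary : Matrix (Fin n) (Fin n) ℝ) with hU_def
  set d : Fin n → ℝ := hH.eigenvalues with hd_def
  have hU1 : U * star U = 1 := hH.eigenvectorUnitary.2.2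
  have hU2 : star U * U = 1 := hH.eigenvectorUnitary.2.1
  have hspec : C = U * Matrix.diagonal d * star U := by
    have := hH.spectral_theorem
    simpa [RCLike.ofReal_real_eq_id] using this
  have hd0 : ∀ i, 0 ≤ d i := hC.eigenvalues_nonneg
  -- A decomposition
  have hDiag : σ ^ 2 • (1 : Matrix (Fin n) (Fin n) ℝ) + Matrix.diagonal d
      = Matrix.diagonal (fun i => σ ^ 2 + d i) := by
    ext i j
    by_cases h : i = j <;>
      simp [h, Matrix.diagonal_apply, Matrix.one_apply, Matrix.add_apply, Matrix.smul_apply]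
  have hA : σ ^ 2 • (1 : Matrix (Fin n) (Fin n) ℝ) + C
      = U * Matrix.diagonal (fun i => σ ^ 2 + d i) * star U := by
    rw [← hDiag, Matrix.mul_add, Matrix.add_mul, hspec]
    congr 1
    rw [mul_smul_comm, Matrix.mul_one, Matrix.smul_mul, hU1]
  have hsd : ∀ i : Fin n, 0 < σ ^ 2 + d i := fun i => by have := hd0 i; positivity
  -- determinant
  have hdet : (σ ^ 2 • (1 : Matrix (Fin n) (Fin n) ℝ) + C).det = ∏ i, (σ ^ 2 + d i) := by
    rw [hA, Matrix.det_mul, Matrix.det_mul, Matrix.det_diagonal]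
    have h1 : U.det * (star U).det = 1 := by rw [← Matrix.det_mul, hU1, Matrix.det_one]
    calc U.det * (∏ i, (σ ^ 2 + d i)) * (star U).det
        = (∏ i, (σ ^ 2 + d i)) * (U.det * (star U).det) := by ring
      _ = ∏ i, (σ ^ 2 + d i) := by rw [h1, mul_one]
  -- inverse
  have hAinv : (σ ^ 2 • (1 : Matrix (Fin n) (Fin n) ℝ) + C)⁻¹
      = U * Matrix.diagonal (fun i => (σ ^ 2 + d i)⁻¹) * star U := by
    apply Matrix.inv_eq_right_inv
    rw [hA]
    have hDD : Matrix.diagonal (fun i => σ ^ 2 + d i) *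
        Matrix.diagonal (fun i => (σ ^ 2 + d i)⁻¹) = 1 := by
      rw [Matrix.diagonal_mul_diagonal]
      have : (fun i => (σ ^ 2 + d i) * (σ ^ 2 + d i)⁻¹) = fun _ : Fin n => (1 : ℝ) :=
        funext fun i => mul_inv_cancel₀ (hsd i).ne'
      rw [this, Matrix.diagonal_one]
    calc U * Matrix.diagonal (fun i => σ ^ 2 + d i) * star U *
          (U * Matrix.diagonal (fun i => (σ ^ 2 + d i)⁻¹) * star U)
        = U * Matrix.diagonal (fun i => σ ^ 2 + d i) * (star U * U) *
            Matrix.diagonal (fun i => (σ ^ 2 + d i)⁻¹) * star U := by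
          simp only [Matrix.mul_assoc]
      _ = 1 := by
          rw [hU2, Matrix.mul_one, Matrix.mul_assoc U, hDD, Matrix.mul_one, hU1]
  -- vecMul vs mulVec
  have hvecmul : ∀ (M : Matrix (Fin n) (Fin n) ℝ) (v : Fin n → ℝ), v ᵥ* M = star M *ᵥ v := by
    intro M v
    ext i
    simp [Matrix.vecMul, Matrix.mulVec, dotProduct, Matrix.star_eq_conjTranspose,
      Matrix.conjTranspose_apply, mul_comm]
  set x : EuclideanSpace ℝ (Fin n) := y - μ with hx_def
  set c : Fin n → ℝ := star U *ᵥ x with hc_def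
  -- quadratic form
  have hquad : x ⬝ᵥ ((σ ^ 2 • (1 : Matrix (Fin n) (Fin n) ℝ) + C)⁻¹ *ᵥ x)
      = ∑ i, (σ ^ 2 + d i)⁻¹ * c i ^ 2 := by
    rw [hAinv, ← Matrix.mulVec_mulVec, ← Matrix.mulVec_mulVec, Matrix.dotProduct_mulVec,
      hvecmul, ← hc_def]
    simp only [dotProduct, Matrix.mulVec_diagonal]
    exact Finset.sum_congr rfl fun i _ => by ring
  -- norm
  have hUc : U *ᵥ c = x := by
    rw [hc_def, Matrix.mulVec_mulVec, hU1, Matrix.one_mulVec]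
  have hcc : ∑ i, c i ^ 2 = ∑ i, x i ^ 2 := by
    have h1 : c ⬝ᵥ c = x ⬝ᵥ x := by
      calc c ⬝ᵥ c = c ⬝ᵥ (star U *ᵥ x) := by rw [← hc_def]
        _ = (c ᵥ* star U) ⬝ᵥ x := Matrix.dotProduct_mulVec _ _ _
        _ = (U *ᵥ c) ⬝ᵥ x := by rw [hvecmul, star_star]
        _ = x ⬝ᵥ x := by rw [hUc]
    simpa [dotProduct, sq] using h1
  have hnorm : ‖x‖ ^ 2 = ∑ i, c i ^ 2 := by
    rw [hcc, EuclideanSpace.norm_eq, Real.sq_sqrt (Finset.sum_nonneg fun i _ => by positivity)]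
    exact Finset.sum_congr rfl fun i _ => by
      rw [Real.norm_eq_abs, sq_abs]
  -- trace
  have htrace : C.trace = ∑ i, d i := by
    rw [hspec, Matrix.trace_mul_cycle, hU2, Matrix.one_mul,
      Matrix.trace_diagonal]
  -- prefactor
  have hco : (2 * Real.pi * σ ^ 2) ^ (-(n : ℝ) / 2)
      = (2 * Real.pi) ^ (-(n : ℝ) / 2) * σ ^ (-(n : ℝ)) := by
    rw [Real.mul_rpow (by positivity) (by positivity)]
    congr 1
    rw [← Real.rpow_natCast σ 2, ← Real.rpow_mul hσ.le]
    congr 1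
    push_cast
    ring
  have hK : (0 : ℝ) < (2 * Real.pi) ^ (-(n : ℝ) / 2) :=
    Real.rpow_pos_of_pos (by positivity) _
  rw [show y.ofLp - μ.ofLp = x.ofLp by simp [hx_def], hdet, hquad, hnorm, htrace, hco]
  have hmain := scalar_aux n σ hσ c d hd0
  calc |(2 * Real.pi) ^ (-(n : ℝ) / 2) * (∏ i, (σ ^ 2 + d i)) ^ (-(1 : ℝ) / 2) *
        Real.exp (-(1 / 2) * ∑ i, (σ ^ 2 + d i)⁻¹ * c i ^ 2) -
      (2 * Real.pi) ^ (-(n : ℝ) / 2) * σ ^ (-(n : ℝ)) *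
        Real.exp (-(∑ i, c i ^ 2) / (2 * σ ^ 2))|
      = (2 * Real.pi) ^ (-(n : ℝ) / 2) *
        |(∏ i, (σ ^ 2 + d i)) ^ (-(1 : ℝ) / 2) *
            Real.exp (-(1 / 2) * ∑ i, (σ ^ 2 + d i)⁻¹ * c i ^ 2) -
          σ ^ (-(n : ℝ)) * Real.exp (-(∑ i, c i ^ 2) / (2 * σ ^ 2))| := by
        rw [show (2 * Real.pi) ^ (-(n : ℝ) / 2) * (∏ i, (σ ^ 2 + d i)) ^ (-(1 : ℝ) / 2) *
              Real.exp (-(1 / 2) * ∑ i, (σ ^ 2 + d i)⁻¹ * c i ^ 2) -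
            (2 * Real.pi) ^ (-(n : ℝ) / 2) * σ ^ (-(n : ℝ)) *
              Real.exp (-(∑ i, c i ^ 2) / (2 * σ ^ 2))
            = (2 * Real.pi) ^ (-(n : ℝ) / 2) *
              ((∏ i, (σ ^ 2 + d i)) ^ (-(1 : ℝ) / 2) *
                  Real.exp (-(1 / 2) * ∑ i, (σ ^ 2 + d i)⁻¹ * c i ^ 2) -
                σ ^ (-(n : ℝ)) * Real.exp (-(∑ i, c i ^ 2) / (2 * σ ^ 2))) from by ring,
          abs_mul, abs_of_pos hK]
    _ ≤ (2 * Real.pi) ^ (-(n : ℝ) / 2) *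
        (σ ^ (-(n : ℝ)) * ((∑ i, d i) / (2 * σ ^ 2)) * (1 + (∑ i, c i ^ 2) / σ ^ 2)) :=
        mul_le_mul_of_nonneg_left hmain hK.le
    _ = (2 * Real.pi) ^ (-(n : ℝ) / 2) * σ ^ (-(n : ℝ)) * ((∑ i, d i) / (2 * σ ^ 2)) *
        (1 + (∑ i, c i ^ 2) / σ ^ 2) := by ring
end

section
/- Let d, n ∈ ℕ with n ≥ 1, σ > 0, ε ≥ 0, R ≥ 0. Let μ be a probability measure on ℝᵈ, let y ∈ ℝⁿ, let m : ℝᵈ → ℝⁿ be measurable, and let C : ℝᵈ → (n×n real matrices) be measurable such that, for μ-almost every ψ, C(ψ) is symmetric positive semidefinite with tr(C(ψ)) ≤ n·ε, and ‖y − m(ψ)‖ ≤ R. Define p_D = ∫ (2π)^{−n/2} det(σ²Iₙ + C(ψ))^{−1/2} exp(−½ (y−m(ψ))ᵀ(σ²Iₙ + C(ψ))⁻¹(y−m(ψ))) dμ(ψ) and p̃_D = ∫ (2πσ²)^{−n/2} exp(−‖y−m(ψ)‖²/(2σ²)) dμ(ψ). Then |p_D − p̃_D| ≤ (2π)^{−n/2}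 σ^{−n} · (n·ε/(2σ²)) · (1 + R²/σ²). -/
open Matrix Real MeasureTheory

section Aux

lemma aux_prod_one_sub_le {ι : Type*} (s : Finset ι) (b : ι → ℝ) (h0 : ∀ i ∈ s, 0 ≤ b i)
    (h1 : ∀ i ∈ s, b i ≤ 1) :
    1 - ∏ i ∈ s, b i ≤ ∑ i ∈ s, (1 - b i) := by
  induction s using Finset.cons_induction with
  | empty => simp
  | cons a s ha ih =>
    rw [Finset.prod_cons, Finset.sum_cons]
    have hmem : ∀ i ∈ s, i ∈ Finset.cons a s ha := fun i hi => by simp [Finset.mem_cons, hi]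
    have hprod0 : 0 ≤ ∏ i ∈ s, b i := Finset.prod_nonneg fun i hi => h0 i (hmem i hi)
    have hprod1 : ∏ i ∈ s, b i ≤ 1 :=
      Finset.prod_le_one (fun i hi => h0 i (hmem i hi)) (fun i hi => h1 i (hmem i hi))
    have ih' := ih (fun i hi => h0 i (hmem i hi)) (fun i hi => h1 i (hmem i hi))
    have hba0 := h0 a (Finset.mem_cons_self a s)
    have hba1 := h1 a (Finset.mem_cons_self a s)
    nlinarith [mul_nonneg hba0 hprod0]

lemma aux_matrix_facts {n : ℕ} (σ : ℝ) (hσ : 0 < σ) {C : Matrix (Fin n) (Fin n) ℝ}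
    (hC : C.PosSemidef) (v : Fin n → ℝ) :
    ∃ lam w : Fin n → ℝ,
      (∀ i, 0 ≤ lam i) ∧
      (∑ i, lam i = C.trace) ∧
      ((σ^2 • (1:Matrix (Fin n) (Fin n) ℝ) + C).det = ∏ i, (σ^2 + lam i)) ∧
      (v ⬝ᵥ ((σ^2 • (1:Matrix (Fin n) (Fin n) ℝ) + C)⁻¹ *ᵥ v) = ∑ i, (σ^2 + lam i)⁻¹ * (w i)^2) ∧
      (v ⬝ᵥ v = ∑ i, (w i)^2) := by
  have hH : C.IsHermitian := hC.isHermitian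
  set lam : Fin n → ℝ := hH.eigenvalues with hlam
  set U : Matrix (Fin n) (Fin n) ℝ := (hH.eigenvectorUnitary : Matrix (Fin n) (Fin n) ℝ) with hU
  have hUU : star U * U = 1 := Unitary.coe_star_mul_self hH.eigenvectorUnitary
  have hUU' : U * star U = 1 := Unitary.coe_mul_star_self hH.eigenvectorUnitary
  have hDiag : Matrix.diagonal ((RCLike.ofReal : ℝ → ℝ) ∘ lam) = Matrix.diagonal lam := by
    congr 1
  have hspec : C = U * Matrix.diagonal lam * star U := by
    rw [← hDiag]; exact hH.spectral_theorem
  have hlam0 : ∀ i, 0 ≤ lam i := hC.eigenvalues_nonneg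
  have htr : ∑ i, lam i = C.trace := by
    rw [hspec, Matrix.trace_mul_cycle, hUU, one_mul, Matrix.trace_diagonal]
  set A : Matrix (Fin n) (Fin n) ℝ := σ^2 • (1:Matrix (Fin n) (Fin n) ℝ) + C with hA
  have hApos : ∀ i, (0:ℝ) < σ^2 + lam i :=
    fun i => add_pos_of_pos_of_nonneg (pow_pos hσ 2) (hlam0 i)
  have hAspec : A = U * Matrix.diagonal (fun i => σ^2 + lam i) * star U := by
    have h1 : σ^2 • (1:Matrix (Fin n) (Fin n) ℝ) = U * Matrix.diagonal (fun _ => σ^2) * star U := by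
      rw [← Matrix.smul_one_eq_diagonal]
      rw [Matrix.mul_smul, Matrix.smul_mul, mul_one, hUU']
    rw [hA, h1, hspec]
    rw [← Matrix.add_mul, ← Matrix.mul_add, Matrix.diagonal_add]
  have hdet : A.det = ∏ i, (σ^2 + lam i) := by
    rw [hAspec, Matrix.det_mul_right_comm, hUU', one_mul, Matrix.det_diagonal]
  have hAinv : A⁻¹ = U * Matrix.diagonal (fun i => (σ^2 + lam i)⁻¹) * star U := by
    apply Matrix.inv_eq_right_inv
    have hcc : (fun i => (σ^2 + lam i) * (σ^2 + lam i)⁻¹) = fun _ => (1:ℝ) := by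
      funext i; exact mul_inv_cancel₀ (hApos i).ne'
    rw [hAspec]
    simp only [Matrix.mul_assoc]
    rw [← Matrix.mul_assoc (star U) U, hUU, one_mul,
      ← Matrix.mul_assoc (Matrix.diagonal _) (Matrix.diagonal _),
      Matrix.diagonal_mul_diagonal, hcc, Matrix.diagonal_one, one_mul, hUU']
  set w : Fin n → ℝ := star U *ᵥ v with hw
  have hstarU : star U = Uᵀ := by
    rw [Matrix.star_eq_conjTranspose, Matrix.conjTranspose_eq_transpose_of_trivial]
  have hdot : ∀ c : Fin n → ℝ, v ⬝ᵥ ((U * Matrix.diagonal c * star U) *ᵥ v)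
      = ∑ i, c i * (w i)^2 := by
    intro c
    rw [← Matrix.mulVec_mulVec, ← Matrix.mulVec_mulVec, Matrix.dotProduct_mulVec v U,
      ← Matrix.mulVec_transpose, ← hstarU, ← hw]
    simp only [dotProduct, Matrix.mulVec_diagonal, pow_two]
    exact Finset.sum_congr rfl fun i _ => by ring
  refine ⟨lam, w, hlam0, htr, hdet, ?_, ?_⟩
  · rw [hAinv, hdot]
  · have h1 : v ⬝ᵥ v = v ⬝ᵥ ((U * Matrix.diagonal (fun _ => (1:ℝ)) * star U) *ᵥ v) := by
      rw [Matrix.diagonal_one, mul_one, hUU', Matrix.one_mulVec]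
    rw [h1, hdot]
    simp

set_option maxHeartbeats 1000000 in
lemma aux_scalar_key {n : ℕ} (σ ε R : ℝ) (hσ : 0 < σ) (hε : 0 ≤ ε) (hR : 0 ≤ R)
    (lam w : Fin n → ℝ) (hlam : ∀ i, 0 ≤ lam i) (htr : ∑ i, lam i ≤ n * ε)
    (hw : ∑ i, (w i)^2 ≤ R^2) :
    0 ≤ ∑ i, (σ^2 + lam i)⁻¹ * (w i)^2 ∧
    0 < (∏ i, (σ^2 + lam i)) ^ (-(1:ℝ)/2) ∧
    (∏ i, (σ^2 + lam i)) ^ (-(1:ℝ)/2) ≤ σ ^ (-(n:ℝ)) ∧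
    |(∏ i, (σ^2 + lam i)) ^ (-(1:ℝ)/2) * Real.exp (-(1/2) * ∑ i, (σ^2+lam i)⁻¹ * (w i)^2)
      - σ ^ (-(n:ℝ)) * Real.exp (-(∑ i, (w i)^2)/(2*σ^2))|
    ≤ σ ^ (-(n:ℝ)) * (↑n*ε/(2*σ^2)) * (1 + R^2/σ^2) := by
  have hσ2 : (0:ℝ) < σ^2 := by positivity
  have hc : ∀ i, (0:ℝ) < σ^2 + lam i := fun i => by
    have := hlam i; positivity
  set c : Fin n → ℝ := fun i => σ^2 + lam i with hcdef
  set sq : Fin n → ℝ := fun i => Real.sqrt (c i) with hsqdef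
  have hsqpos : ∀ i, 0 < sq i := fun i => Real.sqrt_pos.2 (hc i)
  have hsqge : ∀ i, σ ≤ sq i := fun i => by
    rw [hsqdef]
    rw [show σ = Real.sqrt (σ^2) by rw [Real.sqrt_sq hσ.le]]
    exact Real.sqrt_le_sqrt (by simp [hcdef, hlam i])
  have hsq2 : ∀ i, (sq i)^2 = c i := fun i => Real.sq_sqrt (hc i).le
  set T : ℝ := σ ^ (-(n:ℝ)) with hTdef
  have hT : T = (σ ^ n)⁻¹ := by
    rw [hTdef, Real.rpow_neg hσ.le, Real.rpow_natCast]
  have hTpos : 0 < T := by rw [hT]; positivity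
  set P : ℝ := (∏ i, c i) ^ (-(1:ℝ)/2) with hPdef
  have hprodpos : 0 < ∏ i, c i := Finset.prod_pos fun i _ => hc i
  have hP : P = (∏ i, sq i)⁻¹ := by
    rw [hPdef, neg_div, Real.rpow_neg hprodpos.le, ← Real.sqrt_eq_rpow]
    congr 1
    rw [show Real.sqrt (∏ i, c i) = Real.sqrt ((∏ i, sq i)^2) by
      rw [← Finset.prod_pow]; congr 1; exact Finset.prod_congr rfl fun i _ => (hsq2 i).symm]
    exact Real.sqrt_sq (Finset.prod_nonneg fun i _ => (hsqpos i).le)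
  have hsprodpos : 0 < ∏ i, sq i := Finset.prod_pos fun i _ => hsqpos i
  have hPpos : 0 < P := by rw [hP]; positivity
  have hPT : P ≤ T := by
    rw [hP, hT]
    apply inv_anti₀ (by positivity)
    calc σ ^ n = ∏ _i : Fin n, σ := by simp
    _ ≤ ∏ i, sq i := Finset.prod_le_prod (fun i _ => hσ.le) (fun i _ => hsqge i)
  have hPeq : P = T * ∏ i, σ / sq i := by
    rw [hP, hT, Finset.prod_div_distrib]
    simp only [Finset.prod_const, Finset.card_univ, Fintype.card_fin]
    rw [div_eq_mul_inv, ← mul_assoc, inv_mul_cancel₀ (pow_ne_zero _ hσ.ne'), one_mul]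
  have hb1 : ∀ i, σ / sq i ≤ 1 := fun i => (div_le_one (hsqpos i)).2 (hsqge i)
  have hb0 : ∀ i, 0 ≤ σ / sq i := fun i => by positivity
  have honesub : ∀ i, 1 - σ / sq i ≤ lam i / (2*σ^2) := by
    intro i
    have h1 : 1 - σ / sq i = (sq i - σ) / sq i := by
      rw [sub_div, div_self (hsqpos i).ne']
    rw [h1, div_le_div_iff₀ (hsqpos i) (by positivity)]
    have h2 : lam i = (sq i)^2 - σ^2 := by rw [hsq2 i]; simp [hcdef]
    nlinarith [hsqge i, mul_nonneg (sq_nonneg (sq i - σ))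
      (by linarith [hsqge i] : (0:ℝ) ≤ sq i + 2*σ)]
  have hTP : T - P ≤ T * (↑n*ε/(2*σ^2)) := by
    have h3 : 1 - ∏ i, σ / sq i ≤ ∑ i : Fin n, (1 - σ / sq i) :=
      aux_prod_one_sub_le Finset.univ _ (fun i _ => hb0 i) (fun i _ => hb1 i)
    have h4 : ∑ i : Fin n, (1 - σ / sq i) ≤ ∑ i, lam i / (2*σ^2) :=
      Finset.sum_le_sum fun i _ => honesub i
    have h5 : ∑ i, lam i / (2*σ^2) = (∑ i, lam i) / (2*σ^2) := by
      rw [Finset.sum_div]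
    have h6 : (∑ i, lam i) / (2*σ^2) ≤ ↑n*ε/(2*σ^2) := by
      apply div_le_div_of_nonneg_right htr (by positivity) |>.trans_eq rfl
    calc T - P = T * (1 - ∏ i, σ / sq i) := by rw [hPeq]; ring
    _ ≤ T * (↑n*ε/(2*σ^2)) := by
        apply mul_le_mul_of_nonneg_left _ hTpos.le
        linarith
  set q : ℝ := ∑ i, (c i)⁻¹ * (w i)^2 with hqdef
  set S : ℝ := ∑ i, (w i)^2 with hSdef
  have hS0 : 0 ≤ S := Finset.sum_nonneg fun i _ => sq_nonneg _
  have hq0 : 0 ≤ q := Finset.sum_nonneg fun i _ =>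
    mul_nonneg (inv_nonneg.2 (hc i).le) (sq_nonneg _)
  have hqs : q ≤ S / σ^2 := by
    rw [hSdef, Finset.sum_div]
    apply Finset.sum_le_sum
    intro i _
    rw [div_eq_inv_mul]
    apply mul_le_mul_of_nonneg_right _ (sq_nonneg _)
    exact inv_anti₀ hσ2 (by simp [hcdef, hlam i])
  have hlamle : ∀ i, lam i ≤ ↑n * ε := fun i =>
    le_trans (Finset.single_le_sum (fun j _ => hlam j) (Finset.mem_univ i)) htr
  have hsq' : S / σ^2 - q ≤ R^2 * (↑n*ε) / σ^4 := by
    have h7 : ∀ i, (w i)^2 / σ^2 - (c i)⁻¹ * (w i)^2 ≤ (w i)^2 * ((↑n*ε) / σ^4) := by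
      intro i
      have hkey : (σ^2)⁻¹ - (c i)⁻¹ ≤ (↑n*ε)/σ^4 := by
        rw [inv_sub_inv hσ2.ne' (hc i).ne']
        have hca : c i - σ^2 = lam i := by simp [hcdef]
        rw [hca]
        apply div_le_div₀ (by positivity) (hlamle i) (by positivity)
        calc σ^4 = σ^2 * σ^2 := by ring
        _ ≤ σ^2 * c i := by
            apply mul_le_mul_of_nonneg_left _ hσ2.le
            simp [hcdef, hlam i]
      have he : (w i)^2 / σ^2 - (c i)⁻¹ * (w i)^2 = (w i)^2 * ((σ^2)⁻¹ - (c i)⁻¹) := by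
        rw [div_eq_mul_inv]; ring
      rw [he]
      exact mul_le_mul_of_nonneg_left hkey (sq_nonneg _)
    have h11 : S / σ^2 - q = ∑ i, ((w i)^2 / σ^2 - (c i)⁻¹ * (w i)^2) := by
      rw [Finset.sum_sub_distrib, ← Finset.sum_div, hSdef, hqdef]
    rw [h11]
    calc ∑ i, ((w i)^2 / σ^2 - (c i)⁻¹ * (w i)^2) ≤ ∑ i, (w i)^2 * ((↑n*ε) / σ^4) :=
        Finset.sum_le_sum fun i _ => h7 i
    _ = S * ((↑n*ε) / σ^4) := by rw [← Finset.sum_mul, hSdef]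
    _ ≤ R^2 * ((↑n*ε) / σ^4) := mul_le_mul_of_nonneg_right hw (by positivity)
    _ = R^2 * (↑n*ε) / σ^4 := by ring
  refine ⟨hq0, hPpos, hPT, ?_⟩
  set e1 : ℝ := Real.exp (-(1/2) * q) with he1def
  set e2 : ℝ := Real.exp (-S/(2*σ^2)) with he2def
  have he1pos : 0 < e1 := Real.exp_pos _
  have he2pos : 0 < e2 := Real.exp_pos _
  have he11 : e1 ≤ 1 := Real.exp_le_one_iff.2 (by linarith)
  have h21 : e2 ≤ e1 := by
    apply Real.exp_le_exp.2
    have hh : -S/(2*σ^2) = -(1/2) * (S/σ^2) := by ring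
    rw [hh]
    nlinarith
  have hdiff : e1 - e2 ≤ (S/σ^2 - q)/2 := by
    have hx : (0:ℝ) ≤ (S/σ^2 - q)/2 := by linarith
    have he2eq : e2 = e1 * Real.exp (-((S/σ^2 - q)/2)) := by
      rw [he2def, he1def, ← Real.exp_add]
      exact congrArg Real.exp (by ring)
    have hexp : 1 - Real.exp (-((S/σ^2 - q)/2)) ≤ (S/σ^2 - q)/2 := by
      have := Real.add_one_le_exp (-((S/σ^2 - q)/2))
      linarith
    have hexp0 : 0 ≤ 1 - Real.exp (-((S/σ^2 - q)/2)) := by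
      have : Real.exp (-((S/σ^2 - q)/2)) ≤ 1 := Real.exp_le_one_iff.2 (by linarith)
      linarith
    calc e1 - e2 = e1 * (1 - Real.exp (-((S/σ^2 - q)/2))) := by rw [he2eq]; ring
    _ ≤ 1 * ((S/σ^2 - q)/2) := mul_le_mul he11 hexp hexp0 zero_le_one
    _ = (S/σ^2 - q)/2 := one_mul _
  have hsplit : P * e1 - T * e2 = (P - T) * e1 + T * (e1 - e2) := by ring
  calc |P * e1 - T * e2| ≤ |(P - T) * e1| + |T * (e1 - e2)| := by
        rw [hsplit]; exact abs_add_le _ _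
  _ = (T - P) * e1 + T * (e1 - e2) := by
      rw [abs_mul, abs_mul, abs_of_nonpos (by linarith : P - T ≤ 0),
        abs_of_pos he1pos, abs_of_pos hTpos, abs_of_nonneg (by linarith : 0 ≤ e1 - e2)]
      ring
  _ ≤ (T - P) * 1 + T * ((S/σ^2 - q)/2) := by
      have := mul_le_mul_of_nonneg_left hdiff hTpos.le
      have := mul_le_mul_of_nonneg_left he11 (by linarith : (0:ℝ) ≤ T - P)
      linarith
  _ ≤ T * (↑n*ε/(2*σ^2)) + T * ((R^2 * (↑n*ε) / σ^4)/2) := by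
      have := mul_le_mul_of_nonneg_left (by linarith : S/σ^2 - q ≤ R^2 * (↑n*ε) / σ^4) hTpos.le
      have h10 : T * ((S/σ^2 - q)/2) ≤ T * ((R^2 * (↑n*ε) / σ^4)/2) := by
        apply mul_le_mul_of_nonneg_left _ hTpos.le
        linarith
      linarith
  _ = T * (↑n*ε/(2*σ^2)) * (1 + R^2/σ^2) := by
      have hne : (σ:ℝ) ≠ 0 := hσ.ne'
      field_simp

lemma aux_measurable_det {d n : ℕ} {A : (Fin d → ℝ) → Matrix (Fin n) (Fin n) ℝ}
    (h : ∀ i j, Measurable fun ψ => A ψ i j) : Measurable fun ψ => (A ψ).det := by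
  simp_rw [Matrix.det_apply]
  apply Finset.measurable_sum
  intro p _
  apply Measurable.const_smul
  exact Finset.measurable_prod _ fun i _ => h (p i) i

lemma aux_measurable_inv_entry {d n : ℕ} {A : (Fin d → ℝ) → Matrix (Fin n) (Fin n) ℝ}
    (h : ∀ i j, Measurable fun ψ => A ψ i j) (i j : Fin n) :
    Measurable fun ψ => (A ψ)⁻¹ i j := by
  have hadj : Measurable fun ψ => (A ψ).adjugate i j := by
    simp_rw [Matrix.adjugate_apply]
    apply aux_measurable_det
    intro k l
    simp_rw [Matrix.updateRow_apply]
    by_cases hk : k = j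
    · simp [hk]
    · simp only [hk, if_false]
      exact h k l
  have heq : (fun ψ => (A ψ)⁻¹ i j) = fun ψ => ((A ψ).det)⁻¹ * (A ψ).adjugate i j := by
    funext ψ
    rw [Matrix.inv_def, Ring.inverse_eq_inv', Matrix.smul_apply, smul_eq_mul]
  rw [heq]
  exact (aux_measurable_det h).inv.mul hadj

end Aux

set_option maxHeartbeats 1000000 in
theorem stmt_9 (d n : ℕ) (hn : 1 ≤ n) (σ ε R : ℝ) (hσ : 0 < σ) (hε : 0 ≤ ε) (hR : 0 ≤ R)
    (μ : Measure (Fin d → ℝ)) [IsProbabilityMeasure μ]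
    (y : EuclideanSpace ℝ (Fin n))
    (m : (Fin d → ℝ) → EuclideanSpace ℝ (Fin n)) (hm : Measurable m)
    (C : (Fin d → ℝ) → Matrix (Fin n) (Fin n) ℝ) (hCmeas : ∀ i j, Measurable fun ψ => C ψ i j)
    (hC : ∀ᵐ ψ ∂μ, (C ψ).PosSemidef ∧ (C ψ).trace ≤ n * ε ∧ ‖y - m ψ‖ ≤ R) :
    |(∫ ψ, (2 * Real.pi) ^ (-(n : ℝ) / 2) *
            ((σ ^ 2 • (1 : Matrix (Fin n) (Fin n) ℝ) + C ψ).det) ^ (-(1 : ℝ) / 2) *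
            Real.exp (-(1 / 2) *
              ((y - m ψ) ⬝ᵥ ((σ ^ 2 • (1 : Matrix (Fin n) (Fin n) ℝ) + C ψ)⁻¹ *ᵥ (y - m ψ)))) ∂μ) -
        (∫ ψ, (2 * Real.pi * σ ^ 2) ^ (-(n : ℝ) / 2) *
            Real.exp (-(‖y - m ψ‖ ^ 2) / (2 * σ ^ 2)) ∂μ)| ≤
      (2 * Real.pi) ^ (-(n : ℝ) / 2) * σ ^ (-(n : ℝ)) * (n * ε / (2 * σ ^ 2)) *
        (1 + R ^ 2 / σ ^ 2) := by
  have hπ : (0:ℝ) < 2 * Real.pi := by positivity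
  have hK2pos : (0:ℝ) < (2 * Real.pi) ^ (-(n : ℝ) / 2) := Real.rpow_pos_of_pos hπ _
  have hTpos : (0:ℝ) < σ ^ (-(n:ℝ)) := Real.rpow_pos_of_pos hσ _
  set B : ℝ := (2 * Real.pi) ^ (-(n : ℝ) / 2) * σ ^ (-(n : ℝ)) * (↑n * ε / (2 * σ ^ 2)) *
    (1 + R ^ 2 / σ ^ 2) with hBdef
  set K : ℝ := (2 * Real.pi) ^ (-(n : ℝ) / 2) * σ ^ (-(n : ℝ)) with hKdef
  have hKpos : 0 < K := mul_pos hK2pos hTpos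
  -- the modified first integrand (with sqrt instead of rpow)
  set F' : (Fin d → ℝ) → ℝ := fun ψ => (2 * Real.pi) ^ (-(n : ℝ) / 2) *
      (Real.sqrt ((σ ^ 2 • (1 : Matrix (Fin n) (Fin n) ℝ) + C ψ).det))⁻¹ *
      Real.exp (-(1 / 2) *
        ((y - m ψ) ⬝ᵥ ((σ ^ 2 • (1 : Matrix (Fin n) (Fin n) ℝ) + C ψ)⁻¹ *ᵥ (y - m ψ))))
    with hF'def
  set G : (Fin d → ℝ) → ℝ := fun ψ => (2 * Real.pi * σ ^ 2) ^ (-(n : ℝ) / 2) *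
      Real.exp (-(‖y - m ψ‖ ^ 2) / (2 * σ ^ 2)) with hGdef
  -- constant for G
  have hGconst : (2 * Real.pi * σ ^ 2) ^ (-(n : ℝ) / 2)
      = (2 * Real.pi) ^ (-(n : ℝ) / 2) * σ ^ (-(n:ℝ)) := by
    rw [Real.mul_rpow (by positivity) (sq_nonneg σ)]
    congr 1
    rw [← Real.rpow_natCast σ 2, ← Real.rpow_mul hσ.le]
    norm_num
    rw [show (2:ℝ) * (-(n:ℝ)/2) = -(n:ℝ) by ring, Real.rpow_neg hσ.le, Real.rpow_natCast]
  have hGconstpos : (0:ℝ) < (2 * Real.pi * σ ^ 2) ^ (-(n : ℝ) / 2) := by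
    rw [hGconst]; exact hKpos
  -- pointwise facts on the good set
  have hgood : ∀ᵐ ψ ∂μ,
      ((2 * Real.pi) ^ (-(n : ℝ) / 2) *
          ((σ ^ 2 • (1 : Matrix (Fin n) (Fin n) ℝ) + C ψ).det) ^ (-(1 : ℝ) / 2) *
          Real.exp (-(1 / 2) *
            ((y - m ψ) ⬝ᵥ ((σ ^ 2 • (1 : Matrix (Fin n) (Fin n) ℝ) + C ψ)⁻¹ *ᵥ (y - m ψ))))
        = F' ψ) ∧ |F' ψ - G ψ| ≤ B ∧ |F' ψ| ≤ K := by
    filter_upwards [hC] with ψ hψ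
    obtain ⟨hps, htrC, hnR⟩ := hψ
    obtain ⟨lam, w, hlam0, htrlam, hdet, hq, hvv⟩ := aux_matrix_facts σ hσ hps (y - m ψ)
    have htr' : ∑ i, lam i ≤ ↑n * ε := by rw [htrlam]; exact htrC
    have hnormsq : ‖y - m ψ‖ ^ 2 = ∑ i, (w i)^2 := by
      rw [← hvv, ← real_inner_self_eq_norm_sq]
      rw [real_inner_self_eq_norm_sq, EuclideanSpace.norm_sq_eq]
      simp [dotProduct, sq]
    have hwR : ∑ i, (w i)^2 ≤ R^2 := by
      rw [← hnormsq]
      exact pow_le_pow_left₀ (norm_nonneg _) hnR 2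
    obtain ⟨hq0, hPpos, hPle, habs⟩ := aux_scalar_key σ ε R hσ hε hR lam w hlam0 htr' hwR
    have hdetpos : 0 < (σ ^ 2 • (1 : Matrix (Fin n) (Fin n) ℝ) + C ψ).det := by
      rw [hdet]
      exact Finset.prod_pos fun i _ => add_pos_of_pos_of_nonneg (pow_pos hσ 2) (hlam0 i)
    have hrpow : ((σ ^ 2 • (1 : Matrix (Fin n) (Fin n) ℝ) + C ψ).det) ^ (-(1 : ℝ) / 2)
        = (Real.sqrt ((σ ^ 2 • (1 : Matrix (Fin n) (Fin n) ℝ) + C ψ).det))⁻¹ := by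
      rw [neg_div, Real.rpow_neg hdetpos.le, ← Real.sqrt_eq_rpow]
    refine ⟨by simp only [hF'def]; rw [hrpow], ?_, ?_⟩
    · have hFval : F' ψ = (2 * Real.pi) ^ (-(n : ℝ) / 2) *
          ((∏ i, (σ^2 + lam i)) ^ (-(1:ℝ)/2)
            * Real.exp (-(1/2) * ∑ i, (σ^2+lam i)⁻¹ * (w i)^2)) := by
        simp only [hF'def]
        rw [← hrpow, hdet, WithLp.ofLp_sub, hq, mul_assoc]
      have hGval : G ψ = (2 * Real.pi) ^ (-(n : ℝ) / 2) *
          (σ ^ (-(n:ℝ)) * Real.exp (-(∑ i, (w i)^2)/(2*σ^2))) := by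
        simp only [hGdef]
        rw [hGconst, hnormsq, mul_assoc]
      rw [hFval, hGval, ← mul_sub, abs_mul, abs_of_pos hK2pos, hBdef]
      calc (2 * Real.pi) ^ (-(n : ℝ) / 2) *
          |(∏ i, (σ^2 + lam i)) ^ (-(1:ℝ)/2) * Real.exp (-(1/2) * ∑ i, (σ^2+lam i)⁻¹ * (w i)^2)
            - σ ^ (-(n:ℝ)) * Real.exp (-(∑ i, (w i)^2)/(2*σ^2))|
          ≤ (2 * Real.pi) ^ (-(n : ℝ) / 2) *
            (σ ^ (-(n:ℝ)) * (↑n*ε/(2*σ^2)) * (1 + R^2/σ^2)) :=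
          mul_le_mul_of_nonneg_left habs hK2pos.le
        _ = (2 * Real.pi) ^ (-(n : ℝ) / 2) * σ ^ (-(n : ℝ)) * (↑n * ε / (2 * σ ^ 2)) *
            (1 + R ^ 2 / σ ^ 2) := by ring
    · have hFval : F' ψ = (2 * Real.pi) ^ (-(n : ℝ) / 2) *
          ((∏ i, (σ^2 + lam i)) ^ (-(1:ℝ)/2)
            * Real.exp (-(1/2) * ∑ i, (σ^2+lam i)⁻¹ * (w i)^2)) := by
        simp only [hF'def]
        rw [← hrpow, hdet, WithLp.ofLp_sub, hq, mul_assoc]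
      rw [hFval, abs_mul, abs_of_pos hK2pos, abs_mul, hKdef]
      rw [abs_of_pos hPpos, abs_of_pos (Real.exp_pos _)]
      apply mul_le_mul_of_nonneg_left _ hK2pos.le
      calc (∏ i, (σ^2 + lam i)) ^ (-(1:ℝ)/2) * Real.exp (-(1/2) * ∑ i, (σ^2+lam i)⁻¹ * (w i)^2)
          ≤ σ ^ (-(n:ℝ)) * 1 := by
            apply mul_le_mul hPle _ (Real.exp_pos _).le hTpos.le
            exact Real.exp_le_one_iff.2 (by nlinarith)
        _ = σ ^ (-(n:ℝ)) := mul_one _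
  -- measurability
  have hAe : ∀ i j, Measurable fun ψ => (σ ^ 2 • (1 : Matrix (Fin n) (Fin n) ℝ) + C ψ) i j := by
    intro i j
    exact (hCmeas i j).const_add _
  have hdetm : Measurable fun ψ => (σ ^ 2 • (1 : Matrix (Fin n) (Fin n) ℝ) + C ψ).det :=
    aux_measurable_det hAe
  have hvm : ∀ i, Measurable fun ψ => (y - m ψ) i := fun i =>
    (measurable_pi_apply i).comp ((WithLp.measurable_ofLp 2 _).comp (measurable_const.sub hm))
  have hqm : Measurable fun ψ =>
      (y - m ψ) ⬝ᵥ ((σ ^ 2 • (1 : Matrix (Fin n) (Fin n) ℝ) + C ψ)⁻¹ *ᵥ (y - m ψ)) := by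
    simp_rw [dotProduct, Matrix.mulVec, dotProduct]
    apply Finset.measurable_sum
    intro i _
    apply (hvm i).mul
    apply Finset.measurable_sum
    intro j _
    exact (aux_measurable_inv_entry hAe i j).mul (hvm j)
  have hF'm : Measurable F' := by
    rw [hF'def]
    apply Measurable.mul
    · exact measurable_const.mul ((Real.continuous_sqrt.measurable.comp hdetm).inv)
    · exact Real.measurable_exp.comp (hqm.const_mul _)
  have hGm : Measurable G := by
    rw [hGdef]
    apply Measurable.mul measurable_const
    apply Real.measurable_exp.comp
    apply Measurable.div_const
    apply Measurable.neg
    exact ((measurable_const.sub hm).norm).pow_const 2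
  -- integrability
  have hF'int : Integrable F' μ := by
    apply Integrable.mono' (integrable_const K) hF'm.aestronglyMeasurable
    filter_upwards [hgood] with ψ h
    simpa using h.2.2
  have hGint : Integrable G μ := by
    apply Integrable.mono' (integrable_const ((2 * Real.pi * σ ^ 2) ^ (-(n : ℝ) / 2)))
      hGm.aestronglyMeasurable
    apply ae_of_all
    intro ψ
    simp only [hGdef]
    simp only [Real.norm_eq_abs, abs_mul, abs_of_pos hGconstpos,
      abs_of_pos (Real.exp_pos _)]
    calc (2 * Real.pi * σ ^ 2) ^ (-(n : ℝ) / 2) * Real.exp (-(‖y - m ψ‖ ^ 2) / (2 * σ ^ 2))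
        ≤ (2 * Real.pi * σ ^ 2) ^ (-(n : ℝ) / 2) * 1 := by
          apply mul_le_mul_of_nonneg_left _ hGconstpos.le
          apply Real.exp_le_one_iff.2
          apply div_nonpos_of_nonpos_of_nonneg _ (by positivity)
          simp [sq_nonneg]
      _ = (2 * Real.pi * σ ^ 2) ^ (-(n : ℝ) / 2) := mul_one _
  -- replace the first integral
  have h1 : (∫ ψ, (2 * Real.pi) ^ (-(n : ℝ) / 2) *
        ((σ ^ 2 • (1 : Matrix (Fin n) (Fin n) ℝ) + C ψ).det) ^ (-(1 : ℝ) / 2) *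
        Real.exp (-(1 / 2) *
          ((y - m ψ) ⬝ᵥ ((σ ^ 2 • (1 : Matrix (Fin n) (Fin n) ℝ) + C ψ)⁻¹ *ᵥ (y - m ψ)))) ∂μ)
      = ∫ ψ, F' ψ ∂μ :=
    integral_congr_ae (hgood.mono fun ψ h => h.1)
  rw [h1]
  have h2 : (∫ ψ, (2 * Real.pi * σ ^ 2) ^ (-(n : ℝ) / 2) *
      Real.exp (-(‖y - m ψ‖ ^ 2) / (2 * σ ^ 2)) ∂μ) = ∫ ψ, G ψ ∂μ := rfl
  rw [h2]
  have h3 : (∫ ψ, F' ψ ∂μ) - (∫ ψ, G ψ ∂μ) = ∫ ψ, F' ψ - G ψ ∂μ :=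
    (integral_sub hF'int hGint).symm
  rw [h3]
  have h4 : |(∫ ψ, F' ψ - G ψ ∂μ)| ≤ ∫ ψ, |F' ψ - G ψ| ∂μ := by
    have h4' := norm_integral_le_integral_norm (μ := μ) (fun ψ => F' ψ - G ψ)
    simpa [Real.norm_eq_abs] using h4'
  have h5 : (∫ ψ, |F' ψ - G ψ| ∂μ) ≤ ∫ _ψ, B ∂μ := by
    apply integral_mono_ae ((hF'int.sub hGint).abs) (integrable_const B)
    exact hgood.mono fun ψ h => h.2.1
  have h6 : (∫ _ψ, B ∂μ) = B := by simp
  linarith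
end

section
/- Let d, n ∈ ℕ with n ≥ 1, σ > 0, ε ≥ 0, R ≥ 0. Let μ be a probability measure on ℝᵈ, let y ∈ ℝⁿ, let m : ℝᵈ → ℝⁿ be measurable, and let λ : ℝᵈ → (Fin n → ℝ) be measurable such that, for μ-almost every ψ and every i, 0 ≤ λ(ψ)ᵢ ≤ ε, and ‖y − m(ψ)‖ ≤ R. Define p̄_D = ∫ ∏ᵢ (2π(σ² + λ(ψ)ᵢ))^{−1/2} exp(−(yᵢ − m(ψ)ᵢ)²/(2(σ² + λ(ψ)ᵢ))) dμ(ψ) and p̃_D = ∫ (2πσ²)^{−n/2} exp(−‖y−m(ψ)‖²/(2σ²)) dμ(ψ). Then |p̄_D − p̃_D| ≤ (2π)^{−n/2} σ^{−n} · (n·ε/(2σ²)) · (1 + R²/σ²). -/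
open Matrix Real MeasureTheory Finset

/-- Difference of products of bounded nonnegative factors. -/
lemma prod_diff_abs_le {ι : Type*} [DecidableEq ι] (s : Finset ι) (f g : ι → ℝ) (A : ℝ)
    (hA : 0 ≤ A)
    (hf0 : ∀ i ∈ s, 0 ≤ f i) (hfA : ∀ i ∈ s, f i ≤ A)
    (hg0 : ∀ i ∈ s, 0 ≤ g i) (hgA : ∀ i ∈ s, g i ≤ A) :
    |∏ i ∈ s, f i - ∏ i ∈ s, g i| ≤ A ^ (s.card - 1) * ∑ i ∈ s, |f i - g i| := by
  induction s using Finset.induction_on with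
  | empty => simp
  | @insert a s ha ih =>
    have hf0' : ∀ i ∈ s, 0 ≤ f i := fun i hi => hf0 i (Finset.mem_insert_of_mem hi)
    have hfA' : ∀ i ∈ s, f i ≤ A := fun i hi => hfA i (Finset.mem_insert_of_mem hi)
    have hg0' : ∀ i ∈ s, 0 ≤ g i := fun i hi => hg0 i (Finset.mem_insert_of_mem hi)
    have hgA' : ∀ i ∈ s, g i ≤ A := fun i hi => hgA i (Finset.mem_insert_of_mem hi)
    have hfa0 : 0 ≤ f a := hf0 a (Finset.mem_insert_self a s)
    have hfaA : f a ≤ A := hfA a (Finset.mem_insert_self a s)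
    have hga0 : 0 ≤ g a := hg0 a (Finset.mem_insert_self a s)
    have hgaA : g a ≤ A := hgA a (Finset.mem_insert_self a s)
    rw [Finset.prod_insert ha, Finset.prod_insert ha, Finset.sum_insert ha,
      Finset.card_insert_of_notMem ha]
    rcases s.eq_empty_or_nonempty with rfl | hs
    · simp
    · have hcard : 1 ≤ s.card := Finset.Nonempty.card_pos hs
      have hP0 : 0 ≤ ∏ i ∈ s, f i := Finset.prod_nonneg hf0'
      have hQ0 : 0 ≤ ∏ i ∈ s, g i := Finset.prod_nonneg hg0'
      have hQA : ∏ i ∈ s, g i ≤ A ^ s.card := by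
        calc ∏ i ∈ s, g i ≤ ∏ _i ∈ s, A := Finset.prod_le_prod hg0' fun i hi => hgA' i hi
        _ = A ^ s.card := Finset.prod_const A
      have key : |f a * ∏ i ∈ s, f i - g a * ∏ i ∈ s, g i| ≤
          |f a| * |∏ i ∈ s, f i - ∏ i ∈ s, g i| + |f a - g a| * |∏ i ∈ s, g i| := by
        have h : f a * ∏ i ∈ s, f i - g a * ∏ i ∈ s, g i =
            f a * (∏ i ∈ s, f i - ∏ i ∈ s, g i) + (f a - g a) * ∏ i ∈ s, g i := by ring
        rw [h]
        calc _ ≤ |f a * (∏ i ∈ s, f i - ∏ i ∈ s, g i)| + |(f a - g a) * ∏ i ∈ s, g i| :=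
              abs_add_le _ _
          _ = _ := by rw [abs_mul, abs_mul]
      have hAA : A * A ^ (s.card - 1) = A ^ s.card := by
        rw [← pow_succ']
        congr 1
        omega
      have hsum0 : 0 ≤ ∑ i ∈ s, |f i - g i| := Finset.sum_nonneg fun i _ => abs_nonneg _
      have t1 : |f a| * |∏ i ∈ s, f i - ∏ i ∈ s, g i| ≤
          A * (A ^ (s.card - 1) * ∑ i ∈ s, |f i - g i|) := by
        apply mul_le_mul _ (ih hf0' hfA' hg0' hgA') (abs_nonneg _) hA
        rw [abs_of_nonneg hfa0]; exact hfaA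
      have t2 : |f a - g a| * |∏ i ∈ s, g i| ≤ |f a - g a| * A ^ s.card := by
        apply mul_le_mul_of_nonneg_left _ (abs_nonneg _)
        rw [abs_of_nonneg hQ0]; exact hQA
      have heq : A * (A ^ (s.card - 1) * ∑ i ∈ s, |f i - g i|) + |f a - g a| * A ^ s.card
          = A ^ (s.card + 1 - 1) * (|f a - g a| + ∑ i ∈ s, |f i - g i|) := by
        rw [← mul_assoc, hAA, Nat.add_sub_cancel]; ring
      linarith

set_option maxHeartbeats 1000000 in
/-- The one-dimensional factor estimate. -/
lemma factor_bound (σ ε a l : ℝ) (hσ : 0 < σ) (ha : 0 ≤ a) (hl0 : 0 ≤ l) (hlε : l ≤ ε) :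
    |(2 * Real.pi * (σ ^ 2 + l)) ^ (-(1 : ℝ) / 2) * Real.exp (-a / (2 * (σ ^ 2 + l))) -
      (2 * Real.pi * σ ^ 2) ^ (-(1 : ℝ) / 2) * Real.exp (-a / (2 * σ ^ 2))| ≤
    (2 * Real.pi * σ ^ 2) ^ (-(1 : ℝ) / 2) * (ε / (2 * σ ^ 2)) * (1 + a / σ ^ 2) := by
  have hπ := Real.pi_pos
  have hσ2 : (0:ℝ) < σ ^ 2 := by positivity
  have hsl : (0:ℝ) < σ ^ 2 + l := by linarith
  have ht : (0:ℝ) < 2 * Real.pi * σ ^ 2 := by positivity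
  have hs : (0:ℝ) < 2 * Real.pi * (σ ^ 2 + l) := by positivity
  have hconv : ∀ x : ℝ, 0 ≤ x → x ^ (-(1 : ℝ) / 2) = (Real.sqrt x)⁻¹ := by
    intro x hx
    rw [neg_div, Real.rpow_neg hx, Real.sqrt_eq_rpow]
  rw [hconv _ ht.le, hconv _ hs.le]
  set A : ℝ := Real.sqrt (2 * Real.pi * σ ^ 2) with hAdef
  set B : ℝ := Real.sqrt (2 * Real.pi * (σ ^ 2 + l)) with hBdef
  have hA : 0 < A := Real.sqrt_pos.mpr ht
  have hB : 0 < B := Real.sqrt_pos.mpr hs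
  have hA2 : A ^ 2 = 2 * Real.pi * σ ^ 2 := Real.sq_sqrt ht.le
  have hB2 : B ^ 2 = 2 * Real.pi * (σ ^ 2 + l) := Real.sq_sqrt hs.le
  have hAB : A ≤ B := Real.sqrt_le_sqrt (by nlinarith [mul_nonneg hπ.le hl0])
  set p : ℝ := Real.exp (-a / (2 * (σ ^ 2 + l))) with hpdef
  set q : ℝ := Real.exp (-a / (2 * σ ^ 2)) with hqdef
  have hp1 : p ≤ 1 := by
    rw [hpdef]
    apply Real.exp_le_one_iff.mpr
    apply div_nonpos_of_nonpos_of_nonneg (by linarith) (by positivity)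
  have hq1 : q ≤ 1 := by
    rw [hqdef]
    apply Real.exp_le_one_iff.mpr
    apply div_nonpos_of_nonpos_of_nonneg (by linarith) (by positivity)
  have hq0 : 0 < q := Real.exp_pos _
  have hp0 : 0 < p := Real.exp_pos _
  have hqp : q ≤ p := by
    rw [hpdef, hqdef]
    apply Real.exp_le_exp.mpr
    rw [div_le_div_iff₀ (by positivity) (by positivity)]
    nlinarith [mul_nonneg ha hl0]
  -- inverse sqrt estimate
  have step1 : A⁻¹ - B⁻¹ ≤ A⁻¹ * (l / (2 * σ ^ 2)) := by
    have hd : (B - A) * (B + A) = 2 * Real.pi * l := by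
      linear_combination hB2 - hA2
    have hd2 : 2 * σ ^ 2 * ((B - A) * (B + A)) = 2 * σ ^ 2 * (2 * Real.pi * l) := by rw [hd]
    have hA2l : l * (2 * Real.pi * σ ^ 2) = l * A ^ 2 := by rw [hA2]
    have h1 : 2 * σ ^ 2 * (B - A) ≤ l * B := by
      nlinarith [hd2, hA2l,
        mul_le_mul_of_nonneg_left (mul_le_mul_of_nonneg_left hAB hA.le) hl0,
        mul_le_mul_of_nonneg_left (mul_le_mul_of_nonneg_right hAB hB.le) hl0,
        (by positivity : (0:ℝ) < A + B)]
    rw [inv_sub_inv hA.ne' hB.ne', div_le_iff₀ (mul_pos hA hB)]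
    have he : A⁻¹ * (l / (2 * σ ^ 2)) * (A * B) = (A⁻¹ * A) * (l / (2 * σ ^ 2) * B) := by ring
    rw [he, inv_mul_cancel₀ hA.ne', one_mul, div_mul_eq_mul_div, le_div_iff₀ (by positivity)]
    linarith [h1]
  -- exp estimate
  have step2 : p - q ≤ l / (2 * σ ^ 2) * (a / σ ^ 2) := by
    set x : ℝ := a / (2 * (σ ^ 2 + l)) with hx
    set y : ℝ := a / (2 * σ ^ 2) with hy
    have hx0 : 0 ≤ x := by positivity
    have hxy : x ≤ y := by
      rw [hx, hy, div_le_div_iff₀ (by positivity) (by positivity)]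
      nlinarith [mul_nonneg ha hl0]
    have hpq : p - q ≤ y - x := by
      have he : Real.exp (-x) * (1 + (x - y)) ≤ Real.exp (-y) := by
        rw [show -y = -x + (x - y) by ring, Real.exp_add]
        nlinarith [mul_le_mul_of_nonneg_left (Real.add_one_le_exp (x - y))
          (Real.exp_pos (-x)).le]
      have hex1 : Real.exp (-x) ≤ 1 := Real.exp_le_one_iff.mpr (by linarith)
      have h6 : Real.exp (-x) * (y - x) ≤ y - x := by
        have := mul_le_mul_of_nonneg_right hex1 (sub_nonneg.mpr hxy)
        linarith
      have hp' : p = Real.exp (-x) := by rw [hpdef, hx, neg_div]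
      have hq' : q = Real.exp (-y) := by rw [hqdef, hy, neg_div]
      rw [hp', hq']
      nlinarith [he, h6]
    have hyx : y - x ≤ l / (2 * σ ^ 2) * (a / σ ^ 2) := by
      have h4 : y - x = a * l / (2 * σ ^ 2 * (2 * (σ ^ 2 + l))) * 2 := by
        rw [hy, hx, div_sub_div _ _ (by positivity) (by positivity),
          div_mul_eq_mul_div, div_eq_div_iff (by positivity) (by positivity)]
        ring
      have h5 : l / (2 * σ ^ 2) * (a / σ ^ 2) = a * l / (2 * σ ^ 2 * σ ^ 2) := by
        rw [div_mul_div_comm, mul_comm l a]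
      rw [h4, h5, div_mul_eq_mul_div, div_le_div_iff₀ (by positivity) (by positivity)]
      nlinarith [mul_nonneg (mul_nonneg ha hl0) hσ2.le, mul_nonneg (mul_nonneg ha hl0) hl0,
        mul_nonneg (mul_nonneg (mul_nonneg ha hl0) hσ2.le) hl0]
    linarith
  -- combine
  have hUV : B⁻¹ ≤ A⁻¹ := inv_anti₀ hA hAB
  have hU0 : 0 < B⁻¹ := by positivity
  have hV0 : 0 < A⁻¹ := by positivity
  have haσ : 0 ≤ a / σ ^ 2 := by positivity
  have hεl : l / (2 * σ ^ 2) ≤ ε / (2 * σ ^ 2) := by gcongr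
  have hl2 : 0 ≤ l / (2 * σ ^ 2) := by positivity
  have hε2 : 0 ≤ ε / (2 * σ ^ 2) := div_nonneg (hl0.trans hlε) (by positivity)
  rw [abs_le]
  constructor
  · have h_lo1 : B⁻¹ * q ≤ B⁻¹ * p := mul_le_mul_of_nonneg_left hqp hU0.le
    have e2 : A⁻¹ * q - B⁻¹ * q = (A⁻¹ - B⁻¹) * q := by ring
    have h_lo2 : (A⁻¹ - B⁻¹) * q ≤ A⁻¹ * (l / (2 * σ ^ 2)) * q :=
      mul_le_mul_of_nonneg_right step1 hq0.le
    have h_lo3 : A⁻¹ * (l / (2 * σ ^ 2)) * q ≤ A⁻¹ * (ε / (2 * σ ^ 2)) * (1 + a / σ ^ 2) := by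
      apply mul_le_mul
      · exact mul_le_mul_of_nonneg_left hεl hV0.le
      · linarith
      · exact hq0.le
      · exact mul_nonneg hV0.le hε2
    linarith
  · have h_up1 : B⁻¹ * p ≤ A⁻¹ * p := mul_le_mul_of_nonneg_right hUV hp0.le
    have e1 : A⁻¹ * p - A⁻¹ * q = A⁻¹ * (p - q) := by ring
    have h_up2 : A⁻¹ * (p - q) ≤ A⁻¹ * (l / (2 * σ ^ 2) * (a / σ ^ 2)) :=
      mul_le_mul_of_nonneg_left step2 hV0.le
    have h_up3 : l / (2 * σ ^ 2) * (a / σ ^ 2) ≤ ε / (2 * σ ^ 2) * (1 + a / σ ^ 2) :=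
      mul_le_mul hεl (by linarith) haσ hε2
    have h_up4 : A⁻¹ * (l / (2 * σ ^ 2) * (a / σ ^ 2)) ≤
        A⁻¹ * (ε / (2 * σ ^ 2) * (1 + a / σ ^ 2)) :=
      mul_le_mul_of_nonneg_left h_up3 hV0.le
    have e3 : A⁻¹ * (ε / (2 * σ ^ 2) * (1 + a / σ ^ 2)) =
        A⁻¹ * (ε / (2 * σ ^ 2)) * (1 + a / σ ^ 2) := by ring
    linarith

lemma factor_mem (σ a l : ℝ) (hσ : 0 < σ) (ha : 0 ≤ a) (hl0 : 0 ≤ l) :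
    0 ≤ (2 * Real.pi * (σ ^ 2 + l)) ^ (-(1 : ℝ) / 2) * Real.exp (-a / (2 * (σ ^ 2 + l))) ∧
    (2 * Real.pi * (σ ^ 2 + l)) ^ (-(1 : ℝ) / 2) * Real.exp (-a / (2 * (σ ^ 2 + l))) ≤
      (2 * Real.pi * σ ^ 2) ^ (-(1 : ℝ) / 2) := by
  have hπ := Real.pi_pos
  have hσ2 : (0:ℝ) < σ ^ 2 := by positivity
  have hsl : (0:ℝ) < σ ^ 2 + l := by linarith
  have ht : (0:ℝ) < 2 * Real.pi * σ ^ 2 := by positivity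
  have hs : (0:ℝ) < 2 * Real.pi * (σ ^ 2 + l) := by positivity
  constructor
  · exact mul_nonneg (Real.rpow_nonneg hs.le _) (Real.exp_pos _).le
  · calc (2 * Real.pi * (σ ^ 2 + l)) ^ (-(1 : ℝ) / 2) * Real.exp (-a / (2 * (σ ^ 2 + l)))
        ≤ (2 * Real.pi * (σ ^ 2 + l)) ^ (-(1 : ℝ) / 2) * 1 := by
          apply mul_le_mul_of_nonneg_left _ (Real.rpow_nonneg hs.le _)
          exact Real.exp_le_one_iff.mpr
              (div_nonpos_of_nonpos_of_nonneg (by linarith) (by positivity))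
      _ = (2 * Real.pi * (σ ^ 2 + l)) ^ (-(1 : ℝ) / 2) := mul_one _
      _ ≤ (2 * Real.pi * σ ^ 2) ^ (-(1 : ℝ) / 2) :=
          Real.rpow_le_rpow_of_nonpos ht (by nlinarith [mul_nonneg hπ.le hl0]) (by norm_num)

set_option maxHeartbeats 1000000 in
theorem stmt_10 (d n : ℕ) (hn : 1 ≤ n) (σ ε R : ℝ) (hσ : 0 < σ) (hε : 0 ≤ ε) (hR : 0 ≤ R)
    (μ : Measure (Fin d → ℝ)) [IsProbabilityMeasure μ]
    (y : EuclideanSpace ℝ (Fin n))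
    (m : (Fin d → ℝ) → EuclideanSpace ℝ (Fin n)) (hm : Measurable m)
    (lam : (Fin d → ℝ) → (Fin n → ℝ)) (hlam : Measurable lam)
    (hb : ∀ᵐ ψ ∂μ, (∀ i, 0 ≤ lam ψ i ∧ lam ψ i ≤ ε) ∧ ‖y - m ψ‖ ≤ R) :
    |(∫ ψ, ∏ i, ((2 * Real.pi * (σ ^ 2 + lam ψ i)) ^ (-(1 : ℝ) / 2) *
            Real.exp (-(y i - m ψ i) ^ 2 / (2 * (σ ^ 2 + lam ψ i)))) ∂μ) -
        (∫ ψ, (2 * Real.pi * σ ^ 2) ^ (-(n : ℝ) / 2) *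
            Real.exp (-(‖y - m ψ‖ ^ 2) / (2 * σ ^ 2)) ∂μ)| ≤
      (2 * Real.pi) ^ (-(n : ℝ) / 2) * σ ^ (-(n : ℝ)) * (n * ε / (2 * σ ^ 2)) *
        (1 + R ^ 2 / σ ^ 2) := by
  have hπ := Real.pi_pos
  have hσ2 : (0:ℝ) < σ ^ 2 := by positivity
  set V : ℝ := (2 * Real.pi * σ ^ 2) ^ (-(1 : ℝ) / 2) with hV
  have hV0 : 0 < V := Real.rpow_pos_of_pos (by positivity) _
  set F : (Fin d → ℝ) → ℝ := fun ψ => ∏ i, ((2 * Real.pi * (σ ^ 2 + lam ψ i)) ^ (-(1 : ℝ) / 2) *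
      Real.exp (-(y i - m ψ i) ^ 2 / (2 * (σ ^ 2 + lam ψ i)))) with hFdef
  set G : (Fin d → ℝ) → ℝ := fun ψ => (2 * Real.pi * σ ^ 2) ^ (-(n : ℝ) / 2) *
      Real.exp (-(‖y - m ψ‖ ^ 2) / (2 * σ ^ 2)) with hGdef
  set B0 : ℝ := (2 * Real.pi) ^ (-(n : ℝ) / 2) * σ ^ (-(n : ℝ)) * (n * ε / (2 * σ ^ 2)) *
      (1 + R ^ 2 / σ ^ 2) with hB0
  -- V ^ n identity
  have hVsplit : V = (2 * Real.pi) ^ (-(1 : ℝ) / 2) * σ ^ (-(1 : ℝ)) := by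
    rw [hV, Real.mul_rpow (by positivity) (by positivity)]
    congr 1
    rw [← Real.rpow_natCast σ 2, ← Real.rpow_mul hσ.le]
    norm_num
  have hVn : V ^ n = (2 * Real.pi) ^ (-(n : ℝ) / 2) * σ ^ (-(n : ℝ)) := by
    rw [hVsplit, mul_pow, ← Real.rpow_natCast ((2 * Real.pi) ^ (-(1:ℝ) / 2)) n,
      ← Real.rpow_natCast (σ ^ (-(1:ℝ))) n,
      ← Real.rpow_mul (by positivity : (0:ℝ) ≤ 2 * Real.pi), ← Real.rpow_mul hσ.le,
      show -(1:ℝ) / 2 * (n:ℝ) = -(n:ℝ) / 2 by ring, show -(1:ℝ) * (n:ℝ) = -(n:ℝ) by ring]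
  -- rewrite G as a product
  have hcoord : ∀ ψ i, (y - m ψ) i = y i - m ψ i := fun ψ i => rfl
  have hnormsq : ∀ ψ, ‖y - m ψ‖ ^ 2 = ∑ i, (y i - m ψ i) ^ 2 := by
    intro ψ
    rw [EuclideanSpace.norm_eq, Real.sq_sqrt (by positivity)]
    apply Finset.sum_congr rfl
    intro i _
    rw [Real.norm_eq_abs, sq_abs, hcoord]
  have hGprod : ∀ ψ, G ψ = ∏ i, (V * Real.exp (-(y i - m ψ i) ^ 2 / (2 * σ ^ 2))) := by
    intro ψ
    simp only [hGdef]
    rw [Finset.prod_mul_distrib, Finset.prod_const, Finset.card_univ, Fintype.card_fin,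
      ← Real.exp_sum]
    congr 1
    · rw [hV, ← Real.rpow_natCast ((2 * Real.pi * σ ^ 2) ^ (-(1:ℝ) / 2)) n,
        ← Real.rpow_mul (by positivity), show -(1:ℝ) / 2 * (n:ℝ) = -(n:ℝ) / 2 by ring]
    · congr 1
      rw [hnormsq ψ, neg_div, Finset.sum_div, ← Finset.sum_neg_distrib]
      simp only [neg_div]
  -- a.e. pointwise bound
  have hpt : ∀ᵐ ψ ∂μ, ‖F ψ - G ψ‖ ≤ B0 := by
    filter_upwards [hb] with ψ hψ
    obtain ⟨hl, hnR⟩ := hψ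
    have ha : ∀ i, (0:ℝ) ≤ (y i - m ψ i) ^ 2 := fun i => sq_nonneg _
    have hS : ∑ i, (y i - m ψ i) ^ 2 ≤ R ^ 2 := by
      rw [← hnormsq ψ]
      exact pow_le_pow_left₀ (norm_nonneg _) hnR 2
    have hS0 : 0 ≤ ∑ i, (y i - m ψ i) ^ 2 :=
      Finset.sum_nonneg fun i _ => ha i
    set S : ℝ := ∑ i, (y i - m ψ i) ^ 2 with hSdef
    have hg0 : ∀ i : Fin n, 0 ≤ V * Real.exp (-(y i - m ψ i) ^ 2 / (2 * σ ^ 2)) :=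
      fun i => mul_nonneg hV0.le (Real.exp_pos _).le
    have hgV : ∀ i : Fin n, V * Real.exp (-(y i - m ψ i) ^ 2 / (2 * σ ^ 2)) ≤ V := by
      intro i
      have : Real.exp (-(y i - m ψ i) ^ 2 / (2 * σ ^ 2)) ≤ 1 :=
        Real.exp_le_one_iff.mpr
          (div_nonpos_of_nonpos_of_nonneg (neg_nonpos.mpr (ha i)) (by positivity))
      calc V * Real.exp (-(y i - m ψ i) ^ 2 / (2 * σ ^ 2)) ≤ V * 1 :=
            mul_le_mul_of_nonneg_left this hV0.le
        _ = V := mul_one V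
    have hk := prod_diff_abs_le Finset.univ
      (fun i => (2 * Real.pi * (σ ^ 2 + lam ψ i)) ^ (-(1 : ℝ) / 2) *
          Real.exp (-(y i - m ψ i) ^ 2 / (2 * (σ ^ 2 + lam ψ i))))
      (fun i => V * Real.exp (-(y i - m ψ i) ^ 2 / (2 * σ ^ 2))) V hV0.le
      (fun i _ => (factor_mem σ _ _ hσ (ha i) (hl i).1).1)
      (fun i _ => (factor_mem σ _ _ hσ (ha i) (hl i).1).2)
      (fun i _ => hg0 i) (fun i _ => hgV i)
    rw [Finset.card_univ, Fintype.card_fin] at hk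
    have hsum : ∑ i, |(2 * Real.pi * (σ ^ 2 + lam ψ i)) ^ (-(1 : ℝ) / 2) *
          Real.exp (-(y i - m ψ i) ^ 2 / (2 * (σ ^ 2 + lam ψ i))) -
          V * Real.exp (-(y i - m ψ i) ^ 2 / (2 * σ ^ 2))| ≤
        ∑ i, V * (ε / (2 * σ ^ 2)) * (1 + (y i - m ψ i) ^ 2 / σ ^ 2) := by
      apply Finset.sum_le_sum
      intro i _
      exact factor_bound σ ε _ _ hσ (ha i) (hl i).1 (hl i).2
    have hsumeq : ∑ i, V * (ε / (2 * σ ^ 2)) * (1 + (y i - m ψ i) ^ 2 / σ ^ 2) =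
        V * (ε / (2 * σ ^ 2)) * ((n : ℝ) + S / σ ^ 2) := by
      rw [← Finset.mul_sum]
      congr 1
      rw [Finset.sum_add_distrib, Finset.sum_const, Finset.card_univ, Fintype.card_fin,
        ← Finset.sum_div, hSdef]
      simp [nsmul_eq_mul]
    have hpow : V ^ (n - 1) * V = V ^ n := by
      rw [← pow_succ]
      congr 1
      omega
    have hscal : (ε / (2 * σ ^ 2)) * ((n : ℝ) + S / σ ^ 2) ≤
        (n * ε / (2 * σ ^ 2)) * (1 + R ^ 2 / σ ^ 2) := by
      have hn1 : (1:ℝ) ≤ (n:ℝ) := by exact_mod_cast hn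
      have h2 : 0 ≤ ε * R ^ 2 := mul_nonneg hε (sq_nonneg R)
      have h1 : ε * S ≤ (n:ℝ) * (ε * R ^ 2) := by
        nlinarith [mul_le_mul_of_nonneg_left hS hε,
          mul_nonneg (sub_nonneg.mpr hn1) h2]
      have h3 : ε * S * ((σ ^ 2)⁻¹ * (σ ^ 2)⁻¹) ≤
          (n:ℝ) * (ε * R ^ 2) * ((σ ^ 2)⁻¹ * (σ ^ 2)⁻¹) :=
        mul_le_mul_of_nonneg_right h1 (by positivity)
      simp only [div_eq_mul_inv, mul_inv]
      nlinarith [h3]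
    rw [Real.norm_eq_abs]
    calc |F ψ - G ψ| = |F ψ - ∏ i, (V * Real.exp (-(y i - m ψ i) ^ 2 / (2 * σ ^ 2)))| := by
          rw [hGprod ψ]
      _ ≤ V ^ (n - 1) * ∑ i, |(2 * Real.pi * (σ ^ 2 + lam ψ i)) ^ (-(1 : ℝ) / 2) *
            Real.exp (-(y i - m ψ i) ^ 2 / (2 * (σ ^ 2 + lam ψ i))) -
            V * Real.exp (-(y i - m ψ i) ^ 2 / (2 * σ ^ 2))| := hk
      _ ≤ V ^ (n - 1) * (V * (ε / (2 * σ ^ 2)) * ((n : ℝ) + S / σ ^ 2)) := by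
          apply mul_le_mul_of_nonneg_left _ (pow_nonneg hV0.le _)
          rw [← hsumeq]; exact hsum
      _ = V ^ n * ((ε / (2 * σ ^ 2)) * ((n : ℝ) + S / σ ^ 2)) := by
          rw [← hpow]; ring
      _ ≤ V ^ n * ((n * ε / (2 * σ ^ 2)) * (1 + R ^ 2 / σ ^ 2)) :=
          mul_le_mul_of_nonneg_left hscal (pow_nonneg hV0.le _)
      _ = B0 := by rw [hB0, ← hVn]; ring
  -- measurability
  have hmi : ∀ i, Measurable fun ψ => m ψ i := fun i => (measurable_pi_apply i).comp ((WithLp.measurable_ofLp 2 _).comp hm)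
  have hli : ∀ i, Measurable fun ψ => lam ψ i := fun i => (measurable_pi_apply i).comp hlam
  have hFm : Measurable F := by
    apply Finset.measurable_prod
    intro i _
    have h1 : Measurable fun ψ => 2 * Real.pi * (σ ^ 2 + lam ψ i) :=
      (((hli i).const_add (σ ^ 2)).const_mul (2 * Real.pi) : _)
    have h2 : Measurable fun ψ => (2 * Real.pi * (σ ^ 2 + lam ψ i)) ^ (-(1 : ℝ) / 2) := by
      fun_prop
    have h3 : Measurable fun ψ => Real.exp (-(y i - m ψ i) ^ 2 / (2 * (σ ^ 2 + lam ψ i))) := by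
      apply Measurable.exp
      apply Measurable.div
      · exact ((measurable_const.sub (hmi i)).pow_const 2).neg
      · exact ((hli i).const_add (σ ^ 2)).const_mul 2
    exact h2.mul h3
  have hGm : Measurable G := by
    apply Measurable.const_mul
    apply Measurable.exp
    exact (((measurable_const.sub hm).norm.pow_const 2).neg).div_const _
  -- integrability
  have hFb : ∀ᵐ ψ ∂μ, ‖F ψ‖ ≤ V ^ n := by
    filter_upwards [hb] with ψ hψ
    obtain ⟨hl, _⟩ := hψ
    have ha : ∀ i, (0:ℝ) ≤ (y i - m ψ i) ^ 2 := fun i => sq_nonneg _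
    have h0 : 0 ≤ F ψ := Finset.prod_nonneg fun i _ =>
      (factor_mem σ _ _ hσ (ha i) (hl i).1).1
    have h1 : F ψ ≤ V ^ n := by
      calc F ψ ≤ ∏ _i : Fin n, V := Finset.prod_le_prod
            (fun i _ => (factor_mem σ _ _ hσ (ha i) (hl i).1).1)
            (fun i _ => (factor_mem σ _ _ hσ (ha i) (hl i).1).2)
        _ = V ^ n := by rw [Finset.prod_const, Finset.card_univ, Fintype.card_fin]
    rw [Real.norm_eq_abs, abs_of_nonneg h0]
    exact h1
  have hFi : Integrable F μ :=
    Integrable.mono' (integrable_const (V ^ n)) hFm.aestronglyMeasurable hFb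
  have hGb : ∀ ψ, ‖G ψ‖ ≤ (2 * Real.pi * σ ^ 2) ^ (-(n : ℝ) / 2) := by
    intro ψ
    have h0 : 0 ≤ G ψ := mul_nonneg (Real.rpow_nonneg (by positivity) _) (Real.exp_pos _).le
    rw [Real.norm_eq_abs, abs_of_nonneg h0, hGdef]
    calc (2 * Real.pi * σ ^ 2) ^ (-(n : ℝ) / 2) * Real.exp (-(‖y - m ψ‖ ^ 2) / (2 * σ ^ 2))
        ≤ (2 * Real.pi * σ ^ 2) ^ (-(n : ℝ) / 2) * 1 := by
          apply mul_le_mul_of_nonneg_left _ (Real.rpow_nonneg (by positivity) _)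
          exact Real.exp_le_one_iff.mpr (div_nonpos_of_nonpos_of_nonneg
            (neg_nonpos.mpr (sq_nonneg _)) (by positivity))
      _ = _ := mul_one _
  have hGi : Integrable G μ :=
    Integrable.mono' (integrable_const _) hGm.aestronglyMeasurable
      (Filter.Eventually.of_forall hGb)
  -- conclude
  rw [← integral_sub hFi hGi]
  have hfin := norm_integral_le_of_norm_le (integrable_const B0) hpt
  rwa [integral_const, probReal_univ, one_smul, Real.norm_eq_abs] at hfin
end

section
/- Let d, n ∈ ℕ with n ≥ 1, σ > 0, ε ≥ 0, ε' ≥ 0, C ≥ 0, R ≥ 0. Let μ be a probability measure on ℝᵈ, y ∈ ℝⁿ, f, m : ℝᵈ → ℝⁿ measurable, and K : ℝᵈ → (n×n real matrices) measurable such that, for μ-almost every ψ: (i) for every i, |f(ψ)ᵢ − m(ψ)ᵢ| ≤ ε' and |2yᵢ − f(ψ)ᵢ − m(ψ)ᵢ| ≤ C; (ii) K(ψ) is symmetric positive semidefinite with tr(K(ψ)) ≤ n·ε; (iii) ‖y − m(ψ)‖ ≤ R. Let p = ∫ (2πσ²)^{−n/2} exp(−‖y−f(ψ)‖²/(2σ²))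 dμ(ψ) be the exact likelihood and p_D = ∫ (2π)^{−n/2} det(σ²Iₙ + K(ψ))^{−1/2} exp(−½ (y−m(ψ))ᵀ(σ²Iₙ + K(ψ))⁻¹(y−m(ψ))) dμ(ψ) the likelihood of the complete mixed meta-model. Then |p − p_D| ≤ (2πσ²)^{−n/2}·n·C·ε'/(2σ²) + (2π)^{−n/2} σ^{−n} · (n·ε/(2σ²)) · (1 + R²/σ²). -/
open Matrix Real MeasureTheory

lemma exp_lip {a b : ℝ} (ha : 0 ≤ a) (hab : a ≤ b) :
    Real.exp (-a) - Real.exp (-b) ≤ b - a := by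
  have h1 : Real.exp (-a) ≤ 1 := Real.exp_le_one_iff.2 (by linarith)
  have h2 : 1 - (b - a) ≤ Real.exp (-(b - a)) := by
    have := Real.add_one_le_exp (-(b - a)); linarith
  have h3 : Real.exp (-(b - a)) ≤ 1 := Real.exp_le_one_iff.2 (by linarith)
  have key : Real.exp (-a) - Real.exp (-b) = Real.exp (-a) * (1 - Real.exp (-(b - a))) := by
    rw [mul_sub, mul_one, ← Real.exp_add]; ring_nf
  rw [key]
  calc Real.exp (-a) * (1 - Real.exp (-(b - a))) ≤ 1 * (b - a) := by
        apply mul_le_mul h1 (by linarith) (by linarith) zero_le_one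
    _ = b - a := one_mul _

lemma exp_abs_lip {a b : ℝ} (ha : 0 ≤ a) (hb : 0 ≤ b) :
    |Real.exp (-a) - Real.exp (-b)| ≤ |a - b| := by
  rcases le_total a b with h | h
  · have h1 := exp_lip ha h
    have h2 : 0 ≤ Real.exp (-a) - Real.exp (-b) := by
      have := Real.exp_le_exp.2 (neg_le_neg h); linarith
    rw [abs_of_nonneg h2, abs_of_nonpos (by linarith : a - b ≤ 0)]; linarith
  · have h1 := exp_lip hb h
    have h2 : 0 ≤ Real.exp (-b) - Real.exp (-a) := by
      have := Real.exp_le_exp.2 (neg_le_neg h); linarith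
    rw [abs_of_nonpos (by linarith : Real.exp (-a) - Real.exp (-b) ≤ 0),
      abs_of_nonneg (by linarith : (0:ℝ) ≤ a - b)]
    linarith

lemma eucl_normsq {n : ℕ} (x : EuclideanSpace ℝ (Fin n)) : ‖x‖ ^ 2 = ∑ i, x i ^ 2 := by
  rw [EuclideanSpace.norm_eq, Real.sq_sqrt (Finset.sum_nonneg fun i _ => sq_nonneg _)]
  simp [Real.norm_eq_abs, sq_abs]

lemma normsq_bound {n : ℕ} {ε' C : ℝ} (y u v : EuclideanSpace ℝ (Fin n))
    (h : ∀ i, |u i - v i| ≤ ε' ∧ |2 * y i - u i - v i| ≤ C) :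
    |‖y - u‖ ^ 2 - ‖y - v‖ ^ 2| ≤ n * C * ε' := by
  rw [eucl_normsq, eucl_normsq, ← Finset.sum_sub_distrib]
  calc |∑ i, ((y - u) i ^ 2 - (y - v) i ^ 2)|
      ≤ ∑ i, |(y - u) i ^ 2 - (y - v) i ^ 2| := Finset.abs_sum_le_sum_abs _ _
    _ ≤ ∑ _i : Fin n, C * ε' := by
        apply Finset.sum_le_sum
        intro i _
        have h1 := (h i).1
        have h2 := (h i).2
        have hid : (y - u) i ^ 2 - (y - v) i ^ 2
            = (2 * y i - u i - v i) * (v i - u i) := by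
          simp only [PiLp.sub_apply]; ring
        rw [hid, abs_mul, abs_sub_comm (v i) (u i)]
        exact mul_le_mul h2 h1 (abs_nonneg _) (le_trans (abs_nonneg _) h2)
    _ = n * C * ε' := by
        rw [Finset.sum_const, Finset.card_univ, Fintype.card_fin, nsmul_eq_mul]; ring

set_option maxHeartbeats 1000000 in
/-- The key matrix estimate (Proposition 4 pointwise bound). -/
lemma matB {n : ℕ} {σ ε R : ℝ} (hσ : 0 < σ) (hε : 0 ≤ ε) (hR : 0 ≤ R)
    (v : EuclideanSpace ℝ (Fin n)) {K : Matrix (Fin n) (Fin n) ℝ}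
    (hK : K.PosSemidef) (htr : K.trace ≤ n * ε) (hv : ‖v‖ ≤ R) :
    |((σ ^ 2 • (1 : Matrix (Fin n) (Fin n) ℝ) + K).det) ^ (-(1 : ℝ) / 2) *
        Real.exp (-(1 / 2) *
          (v ⬝ᵥ ((σ ^ 2 • (1 : Matrix (Fin n) (Fin n) ℝ) + K)⁻¹ *ᵥ v))) -
      σ ^ (-(n : ℝ)) * Real.exp (-(‖v‖ ^ 2) / (2 * σ ^ 2))| ≤
    σ ^ (-(n : ℝ)) * (n * ε / (2 * σ ^ 2)) * (1 + R ^ 2 / σ ^ 2) := by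
  classical
  have hσ2 : (0:ℝ) < σ ^ 2 := by positivity
  set M := σ ^ 2 • (1 : Matrix (Fin n) (Fin n) ℝ) + K with hMdef
  have hH : K.IsHermitian := hK.1
  set lam := hH.eigenvalues with hlamdef
  have hl0 : ∀ i, 0 ≤ lam i := fun i => hK.eigenvalues_nonneg i
  set U : Matrix (Fin n) (Fin n) ℝ := (hH.eigenvectorUnitary : Matrix (Fin n) (Fin n) ℝ)
    with hUdef
  have hU2 : U * star U = 1 := mem_unitaryGroup_iff.mp hH.eigenvectorUnitary.2
  have hU1 : star U * U = 1 := mem_unitaryGroup_iff'.mp hH.eigenvectorUnitary.2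
  have hstarU : star U = Uᵀ := rfl
  have hKspec : K = U * diagonal lam * star U := by
    have := hH.spectral_theorem
    rwa [RCLike.ofReal_real_eq_id, Function.id_comp] at this
  set d : Fin n → ℝ := fun i => σ ^ 2 + lam i with hddef
  have hdpos : ∀ i, 0 < d i := fun i => by have := hl0 i; simp only [hddef]; positivity
  have hdge : ∀ i, σ ^ 2 ≤ d i := fun i => by have := hl0 i; simp only [hddef]; linarith
  have hdiagd : diagonal d = σ ^ 2 • (1 : Matrix (Fin n) (Fin n) ℝ) + diagonal lam := by
    ext i j
    by_cases h : i = j <;>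
      simp [hddef, Matrix.diagonal_apply, Matrix.one_apply, h, Matrix.smul_apply]
  have hMspec : M = U * diagonal d * star U := by
    rw [hdiagd, Matrix.mul_add, Matrix.add_mul, Matrix.mul_smul, Matrix.smul_mul, mul_one,
      hU2, ← hKspec, hMdef]
  -- determinant
  have hdetU : U.det * (star U).det = 1 := by rw [← Matrix.det_mul, hU2, Matrix.det_one]
  have hdet : M.det = ∏ i, d i := by
    rw [hMspec, Matrix.det_mul, Matrix.det_mul, Matrix.det_diagonal]
    calc U.det * (∏ i, d i) * (star U).det = (∏ i, d i) * (U.det * (star U).det) := by ring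
      _ = ∏ i, d i := by rw [hdetU, mul_one]
  -- trace
  have htrace : K.trace = ∑ i, lam i := by
    rw [hKspec, Matrix.trace_mul_cycle, hU1, one_mul, Matrix.trace_diagonal]
  set S := ∑ i, lam i with hSdef
  have hS0 : 0 ≤ S := Finset.sum_nonneg fun i _ => hl0 i
  have hSle : S ≤ n * ε := htrace ▸ htr
  have hlamle : ∀ i, lam i ≤ n * ε := fun i =>
    le_trans (Finset.single_le_sum (fun j _ => hl0 j) (Finset.mem_univ i)) hSle
  -- inverse
  have hMinv : M⁻¹ = U * diagonal (fun i => (d i)⁻¹) * star U := by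
    apply Matrix.inv_eq_right_inv
    rw [hMspec]
    calc U * diagonal d * star U * (U * diagonal (fun i => (d i)⁻¹) * star U)
        = U * diagonal d * (star U * U) * diagonal (fun i => (d i)⁻¹) * star U := by
          simp only [Matrix.mul_assoc]
      _ = U * (diagonal d * diagonal fun i => (d i)⁻¹) * star U := by
          rw [hU1]; simp only [Matrix.mul_assoc, Matrix.mul_one, Matrix.one_mul]
      _ = 1 := by
          rw [Matrix.diagonal_mul_diagonal]
          have h1 : (fun i => d i * (d i)⁻¹) = fun _ => (1:ℝ) := by
            funext i; exact mul_inv_cancel₀ (hdpos i).ne'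
          rw [h1, Matrix.diagonal_one, Matrix.mul_one, hU2]
  -- the transformed vector
  set w : Fin n → ℝ := star U *ᵥ v with hwdef
  have hvecU : ∀ x : Fin n → ℝ, (v : Fin n → ℝ) ⬝ᵥ (U *ᵥ x) = w ⬝ᵥ x := by
    intro x
    rw [Matrix.dotProduct_mulVec, hwdef, hstarU, Matrix.mulVec_transpose]
  have hq : (v : Fin n → ℝ) ⬝ᵥ (M⁻¹ *ᵥ v) = ∑ i, (d i)⁻¹ * w i ^ 2 := by
    rw [hMinv, ← Matrix.mulVec_mulVec, ← Matrix.mulVec_mulVec, hvecU]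
    simp only [← hwdef, dotProduct, Matrix.mulVec_diagonal]
    exact Finset.sum_congr rfl fun i _ => by ring
  have hnorm : ‖v‖ ^ 2 = ∑ i, w i ^ 2 := by
    have h1 : ‖v‖ ^ 2 = (v : Fin n → ℝ) ⬝ᵥ v := by
      rw [eucl_normsq]
      simp only [dotProduct]
      exact Finset.sum_congr rfl fun i _ => pow_two (v i)
    have h2 : (v : Fin n → ℝ) ⬝ᵥ ((1 : Matrix (Fin n) (Fin n) ℝ) *ᵥ v) = w ⬝ᵥ w := by
      rw [← hU2, ← Matrix.mulVec_mulVec, hvecU]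
    rw [h1, show (v : Fin n → ℝ) ⬝ᵥ v
        = (v : Fin n → ℝ) ⬝ᵥ ((1 : Matrix (Fin n) (Fin n) ℝ) *ᵥ v) by rw [Matrix.one_mulVec],
      h2]
    simp only [dotProduct]
    exact Finset.sum_congr rfl fun i _ => (pow_two (w i)).symm
  -- scalar estimates
  set q : ℝ := ∑ i, (d i)⁻¹ * w i ^ 2 with hqdef
  set q0 : ℝ := ‖v‖ ^ 2 / σ ^ 2 with hq0def
  have hq0eq : q0 = ∑ i, (σ ^ 2)⁻¹ * w i ^ 2 := by
    rw [hq0def, hnorm, Finset.sum_div]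
    exact Finset.sum_congr rfl fun i _ => by rw [div_eq_inv_mul]
  have hqnn : 0 ≤ q := by
    rw [hqdef]
    exact Finset.sum_nonneg fun i _ => mul_nonneg (inv_nonneg.2 (hdpos i).le) (sq_nonneg _)
  have hqle : q ≤ q0 := by
    rw [hq0eq, hqdef]
    exact Finset.sum_le_sum fun i _ =>
      mul_le_mul_of_nonneg_right (inv_anti₀ hσ2 (hdge i)) (sq_nonneg _)
  have hq0nn : 0 ≤ q0 := le_trans hqnn hqle
  have hqdiff : q0 - q ≤ n * ε / σ ^ 4 * R ^ 2 := by
    have hterm : ∀ i, (σ ^ 2)⁻¹ * w i ^ 2 - (d i)⁻¹ * w i ^ 2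
        ≤ n * ε / σ ^ 4 * w i ^ 2 := by
      intro i
      have h1 : (σ ^ 2)⁻¹ - (d i)⁻¹ ≤ n * ε / σ ^ 4 := by
        rw [inv_sub_inv hσ2.ne' (hdpos i).ne']
        have hnum : d i - σ ^ 2 = lam i := by simp [hddef]
        rw [hnum]
        have hden : σ ^ 4 ≤ σ ^ 2 * d i := by nlinarith [hdge i, hσ2]
        exact div_le_div₀ (by positivity) (hlamle i) (by positivity) hden
      nlinarith [sq_nonneg (w i), h1]
    have hvR : ‖v‖ ^ 2 ≤ R ^ 2 := by nlinarith [norm_nonneg v, hv]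
    have hc : (0:ℝ) ≤ n * ε / σ ^ 4 := by positivity
    calc q0 - q = ∑ i, ((σ ^ 2)⁻¹ * w i ^ 2 - (d i)⁻¹ * w i ^ 2) := by
          rw [hq0eq, hqdef, ← Finset.sum_sub_distrib]
      _ ≤ ∑ i, n * ε / σ ^ 4 * w i ^ 2 := Finset.sum_le_sum fun i _ => hterm i
      _ = n * ε / σ ^ 4 * ‖v‖ ^ 2 := by rw [hnorm, Finset.mul_sum]
      _ ≤ n * ε / σ ^ 4 * R ^ 2 := mul_le_mul_of_nonneg_left hvR hc
  -- determinant estimates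
  set P := ∏ i, d i with hPdef
  have hPpos : 0 < P := Finset.prod_pos fun i _ => hdpos i
  set a : ℝ := σ ^ (-(n:ℝ)) with hadef
  have hapos : 0 < a := Real.rpow_pos_of_pos hσ _
  set T : ℝ := ∑ i, Real.log (d i / σ ^ 2) with hTdef
  have hT0 : 0 ≤ T := by
    rw [hTdef]
    exact Finset.sum_nonneg fun i _ => Real.log_nonneg ((one_le_div hσ2).2 (hdge i))
  have hTle : T ≤ S / σ ^ 2 := by
    rw [hTdef, hSdef, Finset.sum_div]
    apply Finset.sum_le_sum
    intro i _
    have h1 := Real.log_le_sub_one_of_pos (div_pos (hdpos i) hσ2)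
    have h2 : d i / σ ^ 2 - 1 = lam i / σ ^ 2 := by
      field_simp [hddef]
      simp [hddef]
    linarith [h2 ▸ h1]
  have hA_eq : P ^ (-(1:ℝ)/2) = a * Real.exp (-(1/2) * T) := by
    have hlogP : Real.log P = ∑ i, Real.log (d i) := by
      rw [hPdef]; exact Real.log_prod fun i _ => (hdpos i).ne'
    have hTsum : T = Real.log P - n * (2 * Real.log σ) := by
      rw [hTdef, hlogP]
      have : ∀ i : Fin n, Real.log (d i / σ ^ 2)
          = Real.log (d i) - 2 * Real.log σ := by
        intro i
        rw [Real.log_div (hdpos i).ne' hσ2.ne', Real.log_pow]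
        push_cast; ring
      rw [Finset.sum_congr rfl fun i _ => this i, Finset.sum_sub_distrib,
        Finset.sum_const, Finset.card_univ, Fintype.card_fin, nsmul_eq_mul]
    rw [hadef, Real.rpow_def_of_pos hPpos, Real.rpow_def_of_pos hσ, ← Real.exp_add, hTsum]
    congr 1
    ring
  set A : ℝ := P ^ (-(1:ℝ)/2) with hAdef
  have hApos : 0 < A := Real.rpow_pos_of_pos hPpos _
  have hexpT1 : Real.exp (-(1/2) * T) ≤ 1 := Real.exp_le_one_iff.2 (by linarith)
  have hAle : A ≤ a := by
    rw [hA_eq]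
    nlinarith [hapos, hexpT1]
  have haA : a - A ≤ a * (n * ε / (2 * σ ^ 2)) := by
    have h1 : 1 - Real.exp (-(1/2) * T) ≤ (1/2) * T := by
      have := Real.add_one_le_exp (-(1/2) * T); linarith
    have h2 : (1/2) * T ≤ n * ε / (2 * σ ^ 2) := by
      have h3 : S / σ ^ 2 ≤ n * ε / σ ^ 2 := by
        exact (div_le_div_iff_of_pos_right hσ2).2 hSle
      have h4 : n * ε / (2 * σ ^ 2) = (n * ε / σ ^ 2) / 2 := by ring
      rw [h4]; linarith [hTle]
    calc a - A = a * (1 - Real.exp (-(1/2) * T)) := by rw [hA_eq]; ring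
      _ ≤ a * (n * ε / (2 * σ ^ 2)) :=
          mul_le_mul_of_nonneg_left (le_trans h1 h2) hapos.le
  -- exponential estimates
  set B : ℝ := Real.exp (-(1/2) * q) with hBdef
  set b : ℝ := Real.exp (-(1/2) * q0) with hbdef
  have hbexp : Real.exp (-(‖v‖ ^ 2) / (2 * σ ^ 2)) = b := by
    rw [hbdef, hq0def]
    congr 1
    field_simp
  have hB1 : B ≤ 1 := Real.exp_le_one_iff.2 (by linarith)
  have hbB : b ≤ B := Real.exp_le_exp.2 (by nlinarith)
  have hbpos : 0 < b := Real.exp_pos _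
  have hBb : B - b ≤ n * ε / (2 * σ ^ 2) * (R ^ 2 / σ ^ 2) := by
    have h1 : Real.exp (-((1/2) * q)) - Real.exp (-((1/2) * q0))
        ≤ (1/2) * q0 - (1/2) * q := exp_lip (by linarith) (by linarith)
    have h2 : (1/2) * q0 - (1/2) * q ≤ n * ε / (2 * σ ^ 2) * (R ^ 2 / σ ^ 2) := by
      have h3 : n * ε / (2 * σ ^ 2) * (R ^ 2 / σ ^ 2) = (n * ε / σ ^ 4 * R ^ 2) / 2 := by
        rw [div_mul_div_comm, div_mul_eq_mul_div, div_div]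
        rw [div_eq_div_iff (by positivity) (by positivity)]
        ring
      rw [h3]; linarith [hqdiff]
    calc B - b = Real.exp (-((1/2) * q)) - Real.exp (-((1/2) * q0)) := by
          rw [hBdef, hbdef, neg_mul, neg_mul]
      _ ≤ (1/2) * q0 - (1/2) * q := h1
      _ ≤ _ := h2
  -- combine
  rw [hdet, hq, hbexp]
  rw [← hAdef, ← hBdef]
  have hE : (0:ℝ) ≤ n * ε / (2 * σ ^ 2) := by positivity
  have hRR : (0:ℝ) ≤ R ^ 2 / σ ^ 2 := by positivity
  have hBnn : 0 < B := Real.exp_pos _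
  rw [abs_le]
  have u1 : A * B ≤ a * B := mul_le_mul_of_nonneg_right hAle hBnn.le
  have u2 : a * (B - b) ≤ a * (n * ε / (2 * σ ^ 2) * (R ^ 2 / σ ^ 2)) :=
    mul_le_mul_of_nonneg_left hBb hapos.le
  have u3 : 0 ≤ a * (n * ε / (2 * σ ^ 2)) := mul_nonneg hapos.le hE
  have u4 : 0 ≤ a * (n * ε / (2 * σ ^ 2)) * (R ^ 2 / σ ^ 2) := mul_nonneg u3 hRR
  have l1 : a * b ≤ a * B := mul_le_mul_of_nonneg_left hbB hapos.le
  have l2 : (a - A) * B ≤ a * (n * ε / (2 * σ ^ 2)) * B :=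
    mul_le_mul_of_nonneg_right haA hBnn.le
  have l3 : a * (n * ε / (2 * σ ^ 2)) * B ≤ a * (n * ε / (2 * σ ^ 2)) * 1 :=
    mul_le_mul_of_nonneg_left hB1 u3
  constructor
  · linarith [u1, u2, u3, u4, l1, l2, l3]
  · linarith [u1, u2, u3, u4, l1, l2, l3]


lemma measurable_rpow_const (c : ℝ) : Measurable fun x : ℝ => x ^ c := by
  classical
  have hs : MeasurableSet {x : ℝ | x ≠ 0} := by
    have : {x : ℝ | x ≠ 0} = ({0} : Set ℝ)ᶜ := by ext x; simp
    rw [this]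
    exact (measurableSet_singleton 0).compl
  have hcont : ContinuousOn (fun x : ℝ => x ^ c) {x : ℝ | x ≠ 0} := fun x hx =>
    (Real.continuousAt_rpow_const x c (Or.inl hx)).continuousWithinAt
  have hmeas := hcont.measurable_piecewise
    (continuousOn_const (c := (0:ℝ) ^ c)) hs
  have heq : (fun x : ℝ => x ^ c)
      = Set.piecewise {x : ℝ | x ≠ 0} (fun x => x ^ c) (fun _ => (0:ℝ) ^ c) := by
    funext x
    by_cases h : x = 0
    · simp [Set.piecewise, h]
    · simp [Set.piecewise, h]
  rw [heq]
  exact hmeas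

lemma measurable_matrix_det {α : Type*} [MeasurableSpace α] {n : ℕ}
    {g : α → Matrix (Fin n) (Fin n) ℝ}
    (hg : ∀ i j, Measurable fun x => g x i j) : Measurable fun x => (g x).det := by
  simp_rw [Matrix.det_apply']
  exact Finset.measurable_sum _ fun p _ =>
    (Finset.measurable_prod _ fun i _ => hg (p i) i).const_mul _


set_option maxHeartbeats 1000000 in
theorem stmt_11 (d n : ℕ) (hn : 1 ≤ n) (σ ε ε' C R : ℝ)
    (hσ : 0 < σ) (hε : 0 ≤ ε) (hε' : 0 ≤ ε') (hC : 0 ≤ C) (hR : 0 ≤ R)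
    (μ : Measure (Fin d → ℝ)) [IsProbabilityMeasure μ]
    (y : EuclideanSpace ℝ (Fin n))
    (f m : (Fin d → ℝ) → EuclideanSpace ℝ (Fin n)) (hf : Measurable f) (hm : Measurable m)
    (K : (Fin d → ℝ) → Matrix (Fin n) (Fin n) ℝ)
    (hKmeas : ∀ i j, Measurable fun ψ => K ψ i j)
    (hb : ∀ᵐ ψ ∂μ,
      (∀ i, |f ψ i - m ψ i| ≤ ε' ∧ |2 * y i - f ψ i - m ψ i| ≤ C) ∧
      ((K ψ).PosSemidef ∧ (K ψ).trace ≤ n * ε) ∧ ‖y - m ψ‖ ≤ R) :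
    |(∫ ψ, (2 * Real.pi * σ ^ 2) ^ (-(n : ℝ) / 2) *
            Real.exp (-(‖y - f ψ‖ ^ 2) / (2 * σ ^ 2)) ∂μ) -
        (∫ ψ, (2 * Real.pi) ^ (-(n : ℝ) / 2) *
            ((σ ^ 2 • (1 : Matrix (Fin n) (Fin n) ℝ) + K ψ).det) ^ (-(1 : ℝ) / 2) *
            Real.exp (-(1 / 2) *
              ((y - m ψ) ⬝ᵥ ((σ ^ 2 • (1 : Matrix (Fin n) (Fin n) ℝ) + K ψ)⁻¹ *ᵥ (y - m ψ)))) ∂μ)| ≤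
      (2 * Real.pi * σ ^ 2) ^ (-(n : ℝ) / 2) * (n * C * ε' / (2 * σ ^ 2)) +
        (2 * Real.pi) ^ (-(n : ℝ) / 2) * σ ^ (-(n : ℝ)) * (n * ε / (2 * σ ^ 2)) *
          (1 + R ^ 2 / σ ^ 2) := by
  classical
  have hσ2 : (0:ℝ) < σ ^ 2 := by positivity
  have h2π : (0:ℝ) < 2 * Real.pi := by positivity
  set c1 : ℝ := (2 * Real.pi * σ ^ 2) ^ (-(n : ℝ) / 2) with hc1
  set c2 : ℝ := (2 * Real.pi) ^ (-(n : ℝ) / 2) with hc2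
  have hc1pos : 0 < c1 := Real.rpow_pos_of_pos (by positivity) _
  have hc2pos : 0 < c2 := Real.rpow_pos_of_pos h2π _
  have hsplit : c1 = c2 * σ ^ (-(n:ℝ)) := by
    rw [hc1, hc2, Real.mul_rpow h2π.le hσ2.le]
    congr 1
    rw [← Real.rpow_natCast σ 2, ← Real.rpow_mul hσ.le]
    congr 1
    push_cast; ring
  set g1 : (Fin d → ℝ) → ℝ := fun ψ =>
    c1 * Real.exp (-(‖y - f ψ‖ ^ 2) / (2 * σ ^ 2)) with hg1
  set g3 : (Fin d → ℝ) → ℝ := fun ψ =>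
    c2 * ((σ ^ 2 • (1 : Matrix (Fin n) (Fin n) ℝ) + K ψ).det) ^ (-(1 : ℝ) / 2) *
      Real.exp (-(1 / 2) *
        ((y - m ψ) ⬝ᵥ ((σ ^ 2 • (1 : Matrix (Fin n) (Fin n) ℝ) + K ψ)⁻¹ *ᵥ (y - m ψ)))) with hg3
  -- measurability
  have hnf : Measurable fun ψ => ‖y - f ψ‖ := (measurable_const.sub hf).norm
  have hnm : Measurable fun ψ => ‖y - m ψ‖ := (measurable_const.sub hm).norm
  have hmeas1 : Measurable g1 := by
    apply measurable_const.mul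
    exact (((hnf.pow_const 2).neg).div_const (2 * σ ^ 2)).exp
  have hMe : ∀ i j, Measurable fun ψ =>
      (σ ^ 2 • (1 : Matrix (Fin n) (Fin n) ℝ) + K ψ) i j := by
    intro i j
    simp only [Matrix.add_apply]
    exact measurable_const.add (hKmeas i j)
  have hdetm : Measurable fun ψ => (σ ^ 2 • (1 : Matrix (Fin n) (Fin n) ℝ) + K ψ).det :=
    measurable_matrix_det hMe
  have hadjm : ∀ i j, Measurable fun ψ =>
      (σ ^ 2 • (1 : Matrix (Fin n) (Fin n) ℝ) + K ψ).adjugate i j := by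
    intro i j
    simp_rw [Matrix.adjugate_apply]
    apply measurable_matrix_det
    intro k l
    by_cases hk : k = j
    · simp only [Matrix.updateRow_apply, hk, if_true]
      exact measurable_const
    · simp only [Matrix.updateRow_apply, hk, if_false]
      exact hMe k l
  have hinvm : ∀ i j, Measurable fun ψ =>
      (σ ^ 2 • (1 : Matrix (Fin n) (Fin n) ℝ) + K ψ)⁻¹ i j := by
    intro i j
    simp only [Matrix.inv_def, Matrix.smul_apply, smul_eq_mul, Ring.inverse_eq_inv']
    exact (hdetm.inv).mul (hadjm i j)
  have hym : ∀ i, Measurable fun ψ => (y - m ψ) i := by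
    intro i
    simp only [PiLp.sub_apply]
    exact measurable_const.sub ((measurable_pi_apply i).comp ((PiLp.continuous_ofLp 2 _).measurable.comp hm))
  have hqm : Measurable fun ψ =>
      ((y - m ψ) ⬝ᵥ ((σ ^ 2 • (1 : Matrix (Fin n) (Fin n) ℝ) + K ψ)⁻¹ *ᵥ (y - m ψ))) := by
    simp only [dotProduct, Matrix.mulVec]
    apply Finset.measurable_sum
    intro i _
    apply (hym i).mul
    apply Finset.measurable_sum
    intro j _
    exact (hinvm i j).mul (hym j)
  have hmeas3 : Measurable g3 := by
    apply Measurable.mul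
    · exact measurable_const.mul ((measurable_rpow_const _).comp hdetm)
    · exact (measurable_const.mul hqm).exp
  -- constants
  set E1 : ℝ := c1 * (n * C * ε' / (2 * σ ^ 2)) with hE1
  set E2 : ℝ := c2 * (σ ^ (-(n:ℝ)) * (n * ε / (2 * σ ^ 2)) * (1 + R ^ 2 / σ ^ 2)) with hE2
  -- pointwise a.e. bound
  have hae : ∀ᵐ ψ ∂μ, |g1 ψ - g3 ψ| ≤ E1 + E2 := by
    filter_upwards [hb] with ψ hψ
    obtain ⟨h1, ⟨hpsd, htrψ⟩, hRψ⟩ := hψ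
    set g2v : ℝ := c1 * Real.exp (-(‖y - m ψ‖ ^ 2) / (2 * σ ^ 2)) with hg2v
    have e1 : |g1 ψ - g2v| ≤ E1 := by
      rw [hg1, hg2v, ← mul_sub, abs_mul, abs_of_pos hc1pos]
      have hx : (0:ℝ) ≤ ‖y - f ψ‖ ^ 2 / (2 * σ ^ 2) := by positivity
      have hz : (0:ℝ) ≤ ‖y - m ψ‖ ^ 2 / (2 * σ ^ 2) := by positivity
      have heq : ∀ t : ℝ, -(t) / (2 * σ ^ 2) = -(t / (2 * σ ^ 2)) := fun t => by ring
      rw [heq, heq]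
      have hlip := exp_abs_lip hx hz
      have habs : |‖y - f ψ‖ ^ 2 / (2 * σ ^ 2) - ‖y - m ψ‖ ^ 2 / (2 * σ ^ 2)|
          = |‖y - f ψ‖ ^ 2 - ‖y - m ψ‖ ^ 2| / (2 * σ ^ 2) := by
        rw [div_sub_div_same, abs_div, abs_of_pos (by positivity : (0:ℝ) < 2 * σ ^ 2)]
      have hns := normsq_bound y (f ψ) (m ψ) h1
      have hfin : |‖y - f ψ‖ ^ 2 - ‖y - m ψ‖ ^ 2| / (2 * σ ^ 2)
          ≤ n * C * ε' / (2 * σ ^ 2) :=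
        (div_le_div_iff_of_pos_right (by positivity : (0:ℝ) < 2 * σ ^ 2)).2 hns
      have hstep := le_trans hlip (le_trans (le_of_eq habs) hfin)
      rw [hE1]
      exact mul_le_mul_of_nonneg_left hstep hc1pos.le
    have e2 : |g2v - g3 ψ| ≤ E2 := by
      have hg3eq : g3 ψ = c2 *
          (((σ ^ 2 • (1 : Matrix (Fin n) (Fin n) ℝ) + K ψ).det) ^ (-(1 : ℝ) / 2) *
            Real.exp (-(1 / 2) *
              ((y - m ψ) ⬝ᵥ ((σ ^ 2 • (1 : Matrix (Fin n) (Fin n) ℝ) + K ψ)⁻¹ *ᵥ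
                (y - m ψ))))) := by
        rw [hg3]; ring
      have hg2eq : g2v = c2 * (σ ^ (-(n:ℝ)) * Real.exp (-(‖y - m ψ‖ ^ 2) / (2 * σ ^ 2))) := by
        rw [hg2v, hsplit]; ring
      rw [hg3eq, hg2eq, ← mul_sub, abs_mul, abs_of_pos hc2pos, hE2, abs_sub_comm]
      exact mul_le_mul_of_nonneg_left
        (matB hσ hε hR (y - m ψ) hpsd htrψ hRψ) hc2pos.le
    calc |g1 ψ - g3 ψ| = |(g1 ψ - g2v) + (g2v - g3 ψ)| := by ring_nf
      _ ≤ |g1 ψ - g2v| + |g2v - g3 ψ| := abs_add_le _ _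
      _ ≤ E1 + E2 := add_le_add e1 e2
  -- integrability
  have hexple1 : ∀ t : ℝ, 0 ≤ t → Real.exp (-(t) / (2 * σ ^ 2)) ≤ 1 := fun t ht =>
    Real.exp_le_one_iff.2 (div_nonpos_of_nonpos_of_nonneg (neg_nonpos.2 ht) (by positivity))
  have hg1b : ∀ ψ, |g1 ψ| ≤ c1 := by
    intro ψ
    rw [hg1, abs_mul, abs_of_pos hc1pos, abs_of_pos (Real.exp_pos _)]
    exact mul_le_of_le_one_right hc1pos.le (hexple1 _ (by positivity))
  have hint1 : Integrable g1 μ := by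
    apply (integrable_const c1).mono' hmeas1.aestronglyMeasurable
    filter_upwards with ψ
    rw [Real.norm_eq_abs]
    exact hg1b ψ
  have hint3 : Integrable g3 μ := by
    apply (integrable_const (c1 + (E1 + E2))).mono' hmeas3.aestronglyMeasurable
    filter_upwards [hae] with ψ hψ
    rw [Real.norm_eq_abs]
    have he : |g3 ψ| = |g1 ψ + -(g1 ψ - g3 ψ)| := by congr 1; ring
    have htri : |g3 ψ| ≤ |g1 ψ| + |g1 ψ - g3 ψ| := by
      rw [he]
      exact le_trans (abs_add_le _ _) (by rw [abs_neg])
    linarith [hg1b ψ]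
  -- conclude
  have hgoal1 : (∫ ψ, (2 * Real.pi * σ ^ 2) ^ (-(n : ℝ) / 2) *
      Real.exp (-(‖y - f ψ‖ ^ 2) / (2 * σ ^ 2)) ∂μ) = ∫ ψ, g1 ψ ∂μ := rfl
  have hgoal3 : (∫ ψ, (2 * Real.pi) ^ (-(n : ℝ) / 2) *
      ((σ ^ 2 • (1 : Matrix (Fin n) (Fin n) ℝ) + K ψ).det) ^ (-(1 : ℝ) / 2) *
      Real.exp (-(1 / 2) *
        ((y - m ψ) ⬝ᵥ ((σ ^ 2 • (1 : Matrix (Fin n) (Fin n) ℝ) + K ψ)⁻¹ *ᵥ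
          (y - m ψ)))) ∂μ) = ∫ ψ, g3 ψ ∂μ := rfl
  rw [hgoal1, hgoal3, ← integral_sub hint1 hint3]
  have hbd : |∫ ψ, (g1 ψ - g3 ψ) ∂μ| ≤ E1 + E2 := by
    have h := norm_integral_le_of_norm_le (integrable_const (E1 + E2))
      (by filter_upwards [hae] with ψ hψ; rwa [Real.norm_eq_abs])
    rwa [Real.norm_eq_abs, integral_const, probReal_univ, one_smul] at h
  calc |∫ ψ, (g1 ψ - g3 ψ) ∂μ| ≤ E1 + E2 := hbd
    _ = _ := by rw [hE1, hE2, hc1, hc2]; ring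
end
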